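/- Under assumptions (a) and (b) on the linear model, for every fixed r > 0 the maximal value of the empirical Hough objective converges almost surely to the maximal value of its deterministic counterpart: sup_{θ ∈ ℝ²} M_{r,n}(θ) → M_r(θ_0) = P{ε² ≤ r²‖Z‖²} almost surely as n → ∞, where Z = (X, 1)^T. -/

import Mathlib

open MeasureTheory ProbabilityTheory Filter Set Topology

set_option linter.unusedVariables false
set_option maxHeartbeats 1000000



noncomputable section HoughAux

/-- The Hough band set. -/
def houghSet (r : ℝ) (θ : ℝ × ℝ) : Set (ℝ × ℝ) :=
  {p : ℝ × ℝ | |p.1 * θ.1 + θ.2 - p.2| ^ 2 ≤ r ^ 2 * (p.1 ^ 2 + 1)}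

/-- Empirical average of an indicator. -/
def empAvg {Ω : Type*} (X Y : ℕ → Ω → ℝ) (B : Set (ℝ × ℝ)) (n : ℕ) (ω : Ω) : ℝ :=
  (n : ℝ)⁻¹ * ∑ i ∈ Finset.range n,
    Set.indicator B (fun _ => (1 : ℝ)) (X i ω, Y i ω)

variable {Ω : Type*} (X Y : ℕ → Ω → ℝ)

lemma empAvg_nonneg (B : Set (ℝ × ℝ)) (n : ℕ) (ω : Ω) : 0 ≤ empAvg X Y B n ω := by
  unfold empAvg
  apply mul_nonneg (by positivity)
  apply Finset.sum_nonneg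
  intro i _
  exact Set.indicator_nonneg (fun _ _ => zero_le_one) _

lemma empAvg_le_one (B : Set (ℝ × ℝ)) (n : ℕ) (ω : Ω) : empAvg X Y B n ω ≤ 1 := by
  unfold empAvg
  rcases Nat.eq_zero_or_pos n with h | h
  · simp [h]
  · have : ∑ i ∈ Finset.range n, Set.indicator B (fun _ => (1:ℝ)) (X i ω, Y i ω) ≤ n := by
      calc ∑ i ∈ Finset.range n, Set.indicator B (fun _ => (1:ℝ)) (X i ω, Y i ω)
          ≤ ∑ i ∈ Finset.range n, 1 := by
            apply Finset.sum_le_sum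
            intro i _
            by_cases hm : (X i ω, Y i ω) ∈ B
            · simp [Set.indicator_of_mem hm]
            · simp [Set.indicator_of_notMem hm]
        _ = n := by simp
    rw [inv_mul_le_iff₀ (by exact_mod_cast h : (0:ℝ) < (n:ℝ)), mul_one]
    exact this

lemma empAvg_le_sum4 (B B1 B2 B3 B4 : Set (ℝ × ℝ)) (h : B ⊆ B1 ∪ B2 ∪ B3 ∪ B4)
    (n : ℕ) (ω : Ω) :
    empAvg X Y B n ω ≤ empAvg X Y B1 n ω + empAvg X Y B2 n ω + empAvg X Y B3 n ω
      + empAvg X Y B4 n ω := by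
  unfold empAvg
  have hn : (0:ℝ) ≤ (n : ℝ)⁻¹ := by positivity
  have hpt : ∀ p : ℝ × ℝ, Set.indicator B (fun _ => (1:ℝ)) p ≤
      Set.indicator B1 (fun _ => (1:ℝ)) p + Set.indicator B2 (fun _ => (1:ℝ)) p +
      Set.indicator B3 (fun _ => (1:ℝ)) p + Set.indicator B4 (fun _ => (1:ℝ)) p := by
    intro p
    by_cases hp : p ∈ B
    · have hmem := h hp
      have h1 : ∀ s : Set (ℝ × ℝ), (0:ℝ) ≤ Set.indicator s (fun _ => (1:ℝ)) p :=
        fun s => Set.indicator_nonneg (fun _ _ => zero_le_one) _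
      have h2 : ∀ s : Set (ℝ × ℝ), p ∈ s → Set.indicator s (fun _ => (1:ℝ)) p = 1 :=
        fun s hs => Set.indicator_of_mem hs _
      rw [h2 B hp]
      rcases hmem with ((h'|h')|h')|h' <;> rw [h2 _ h'] <;>
        nlinarith [h1 B1, h1 B2, h1 B3, h1 B4]
    · simp only [Set.indicator_of_notMem hp]
      have h1 : ∀ s : Set (ℝ × ℝ), (0:ℝ) ≤ Set.indicator s (fun _ => (1:ℝ)) p :=
        fun s => Set.indicator_nonneg (fun _ _ => zero_le_one) _
      nlinarith [h1 B1, h1 B2, h1 B3, h1 B4]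
  calc (n : ℝ)⁻¹ * ∑ i ∈ Finset.range n, Set.indicator B (fun _ => (1:ℝ)) (X i ω, Y i ω)
      ≤ (n : ℝ)⁻¹ * ∑ i ∈ Finset.range n,
        (Set.indicator B1 (fun _ => (1:ℝ)) (X i ω, Y i ω) +
         Set.indicator B2 (fun _ => (1:ℝ)) (X i ω, Y i ω) +
         Set.indicator B3 (fun _ => (1:ℝ)) (X i ω, Y i ω) +
         Set.indicator B4 (fun _ => (1:ℝ)) (X i ω, Y i ω)) := by
        apply mul_le_mul_of_nonneg_left _ hn
        exact Finset.sum_le_sum (fun i _ => hpt _)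
    _ = _ := by
        simp only [Finset.sum_add_distrib]
        ring

end HoughAux



noncomputable section ShiftAux

lemma lint_refl (g : ℝ → ENNReal) (hg : Measurable g) (hgs : ∀ x, g (-x) = g x)
    (A : Set ℝ) (hA : MeasurableSet A) :
    ∫⁻ x in (fun x : ℝ => -x) ⁻¹' A, g x ∂volume = ∫⁻ x in A, g x ∂volume := by
  have hmap : Measure.map (fun x : ℝ => -x) volume = volume := by
    simpa using Measure.map_neg_eq_self (volume : Measure ℝ)
  have h1 : ∫⁻ x in A, g x ∂volume = ∫⁻ x, A.indicator g x ∂volume :=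
    (lintegral_indicator hA g).symm
  have h2 : ∫⁻ x, A.indicator g x ∂volume
      = ∫⁻ x, A.indicator g (-x) ∂volume := by
    conv_lhs => rw [← hmap]
    rw [lintegral_map (hg.indicator hA) measurable_neg]
  have h3 : ∀ x : ℝ, A.indicator g (-x) = ((fun x : ℝ => -x) ⁻¹' A).indicator g x := by
    intro x
    by_cases hx : -x ∈ A
    · rw [Set.indicator_of_mem hx, Set.indicator_of_mem (by exact hx), hgs]
    · rw [Set.indicator_of_notMem hx, Set.indicator_of_notMem (by exact hx)]
  rw [h1, h2]
  simp_rw [h3]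
  rw [lintegral_indicator (hA.preimage measurable_neg) g]

lemma lint_transl (F : ℝ → ENNReal) (hF : Measurable F) (c : ℝ)
    (A : Set ℝ) (hA : MeasurableSet A) :
    ∫⁻ x in (fun x : ℝ => x + c) ⁻¹' A, F (x + c) ∂volume = ∫⁻ x in A, F x ∂volume := by
  have hmap : Measure.map (fun x : ℝ => x + c) volume = volume :=
    map_add_right_eq_self volume c
  have h1 : ∫⁻ x in A, F x ∂volume = ∫⁻ x, A.indicator F x ∂volume :=
    (lintegral_indicator hA F).symm
  have h2 : ∫⁻ x, A.indicator F x ∂volume = ∫⁻ x, A.indicator F (x + c) ∂volume := by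
    conv_lhs => rw [← hmap]
    rw [lintegral_map (hF.indicator hA) (measurable_add_const c)]
  have h3 : ∀ x : ℝ, A.indicator F (x + c)
      = ((fun x : ℝ => x + c) ⁻¹' A).indicator (fun x => F (x + c)) x := by
    intro x
    by_cases hx : x + c ∈ A
    · rw [Set.indicator_of_mem hx, Set.indicator_of_mem (by exact hx)]
    · rw [Set.indicator_of_notMem hx, Set.indicator_of_notMem (by exact hx)]
  rw [h1, h2]
  simp_rw [h3]
  rw [lintegral_indicator (hA.preimage (measurable_add_const c)) _]

lemma unimodal_shift_core (g : ℝ → ENNReal) (hg : Measurable g) (hgs : ∀ x, g (-x) = g x)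
    (hm : ∀ x y : ℝ, |x| ≤ |y| → g y ≤ g x) (c L : ℝ) (hL : 0 ≤ L) (hc : 0 ≤ c) :
    ∫⁻ x in Set.Icc (c - L) (c + L), g x ∂volume ≤ ∫⁻ x in Set.Icc (-L) L, g x ∂volume := by
  set S := Set.Icc (c - L) (c + L) with hS
  set I2 := Set.Icc (-L : ℝ) L with hI2
  set E : Set ℝ := Set.Icc (-L) L ∩ Set.Ioi (L - c) with hE
  set E' : Set ℝ := Set.Icc (-L) L ∩ Set.Iio (c - L) with hE'
  have hSm : MeasurableSet S := measurableSet_Icc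
  have hI2m : MeasurableSet I2 := measurableSet_Icc
  have hdiffm : MeasurableSet (S \ I2) := hSm.diff hI2m
  have hintm : MeasurableSet (S ∩ I2) := hSm.inter hI2m
  have hE'm : MeasurableSet E' := measurableSet_Icc.inter measurableSet_Iio
  -- step 1 : split S
  have step1 : ∫⁻ x in S, g x ∂volume
      = ∫⁻ x in S ∩ I2, g x ∂volume + ∫⁻ x in S \ I2, g x ∂volume := by
    rw [← lintegral_union hdiffm (Set.disjoint_left.mpr fun x hx1 hx2 => hx2.2 hx1.2),
      Set.inter_union_diff]
  -- step 2 : pointwise bound on S \ I2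
  have step2 : ∫⁻ x in S \ I2, g x ∂volume ≤ ∫⁻ x in S \ I2, g (x - c) ∂volume := by
    apply setLIntegral_mono (hg.comp (measurable_id.sub_const c))
    intro x hx
    have h1 : |x - c| ≤ L := by
      rw [abs_le]
      constructor <;> [linarith [hx.1.1]; linarith [hx.1.2]]
    have h2 : L < |x| := by
      rcases not_and_or.mp (fun hmem => hx.2 ⟨hmem.1, hmem.2⟩) with h | h
      · push_neg at h; rw [abs_of_neg (by linarith)]; linarith
      · push_neg at h; rw [abs_of_pos (by linarith)]; linarith
    exact hm (x - c) x (by linarith)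
  -- step 3 : translate
  have hpre : (fun x : ℝ => x + c) ⁻¹' (S \ I2) = E := by
    ext y
    simp only [Set.mem_preimage, Set.mem_diff, hS, hI2, hE, Set.mem_Icc, Set.mem_inter_iff,
      Set.mem_Ioi]
    constructor
    · rintro ⟨⟨h1, h2⟩, h3⟩
      rcases not_and_or.mp h3 with h | h <;> push_neg at h
      · constructor
        · constructor <;> linarith
        · linarith
      · constructor
        · constructor <;> linarith
        · linarith
    · rintro ⟨⟨h1, h2⟩, h3⟩
      refine ⟨⟨by linarith, by linarith⟩, ?_⟩
      rintro ⟨h4, h5⟩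
      linarith
  have step3 : ∫⁻ x in S \ I2, g (x - c) ∂volume = ∫⁻ x in E, g x ∂volume := by
    have := lint_transl (fun x => g (x - c)) (hg.comp (measurable_id.sub_const c)) c
      (S \ I2) hdiffm
    simp only [add_sub_cancel_right] at this
    rw [← this, hpre]
  -- step 4 : reflect E to E'
  have hpre2 : (fun x : ℝ => -x) ⁻¹' E = E' := by
    ext y
    simp only [Set.mem_preimage, hE, hE', Set.mem_inter_iff, Set.mem_Icc, Set.mem_Ioi,
      Set.mem_Iio]
    constructor
    · rintro ⟨⟨h1, h2⟩, h3⟩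
      exact ⟨⟨by linarith, by linarith⟩, by linarith⟩
    · rintro ⟨⟨h1, h2⟩, h3⟩
      exact ⟨⟨by linarith, by linarith⟩, by linarith⟩
  have step4 : ∫⁻ x in E, g x ∂volume = ∫⁻ x in E', g x ∂volume := by
    rw [← lint_refl g hg hgs E (measurableSet_Icc.inter measurableSet_Ioi), hpre2]
  -- step 5 : recombine
  have hdisj : Disjoint (S ∩ I2) E' := by
    apply Set.disjoint_left.mpr
    rintro x ⟨hx1, _⟩ ⟨_, hx2⟩
    exact absurd hx1.1 (by simp only [Set.mem_Iio] at hx2; linarith)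
  have hsub : (S ∩ I2) ∪ E' ⊆ I2 := by
    rintro x (hx | hx)
    · exact hx.2
    · exact hx.1
  calc ∫⁻ x in S, g x ∂volume
      = ∫⁻ x in S ∩ I2, g x ∂volume + ∫⁻ x in S \ I2, g x ∂volume := step1
    _ ≤ ∫⁻ x in S ∩ I2, g x ∂volume + ∫⁻ x in E', g x ∂volume := by
        refine add_le_add le_rfl ?_
        rw [← step4, ← step3]
        exact step2
    _ = ∫⁻ x in (S ∩ I2) ∪ E', g x ∂volume := (lintegral_union hE'm hdisj).symm
    _ ≤ ∫⁻ x in I2, g x ∂volume := lintegral_mono_set hsub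

lemma unimodal_shift (g : ℝ → ENNReal) (hg : Measurable g) (hgs : ∀ x, g (-x) = g x)
    (hm : ∀ x y : ℝ, |x| ≤ |y| → g y ≤ g x) (c L : ℝ) (hL : 0 ≤ L) :
    ∫⁻ x in Set.Icc (c - L) (c + L), g x ∂volume ≤ ∫⁻ x in Set.Icc (-L) L, g x ∂volume := by
  rcases le_or_gt 0 c with hc | hc
  · exact unimodal_shift_core g hg hgs hm c L hL hc
  · have hset : Set.Icc (c - L) (c + L) = (fun x : ℝ => -x) ⁻¹' Set.Icc (-c - L) (-c + L) := by
      ext x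
      simp only [Set.mem_Icc, Set.mem_preimage]
      constructor <;> rintro ⟨h1, h2⟩ <;> constructor <;> linarith
    rw [hset, lint_refl g hg hgs _ measurableSet_Icc]
    exact unimodal_shift_core g hg hgs hm (-c) L hL (by linarith)

end ShiftAux



noncomputable section SLLNAux


lemma emp_slln {Ω : Type*} [MeasureSpace Ω] [IsProbabilityMeasure (ℙ : Measure Ω)]
    (X Y : ℕ → Ω → ℝ) (hmX : ∀ i, Measurable (X i)) (hmY : ∀ i, Measurable (Y i))
    (hindep : iIndepFun (fun i ω => (X i ω, Y i ω)) ℙ)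
    (hident : ∀ i, IdentDistrib (fun ω => (X i ω, Y i ω)) (fun ω => (X 0 ω, Y 0 ω)) ℙ ℙ)
    (B : Set (ℝ × ℝ)) (hB : MeasurableSet B) :
    ∀ᵐ ω ∂ℙ, Tendsto (fun n => empAvg X Y B n ω) atTop
      (nhds ((ℙ ((fun ω => (X 0 ω, Y 0 ω)) ⁻¹' B)).toReal)) := by
  set φ : ℝ × ℝ → ℝ := Set.indicator B (fun _ => (1 : ℝ)) with hφdef
  have hφ : Measurable φ := measurable_const.indicator hB
  set V : ℕ → Ω → ℝ := fun i ω => φ (X i ω, Y i ω) with hV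
  have hVind : ∀ i, V i = Set.indicator ((fun ω => (X i ω, Y i ω)) ⁻¹' B) (fun _ => (1:ℝ)) := by
    intro i
    funext ω
    by_cases h : (X i ω, Y i ω) ∈ B
    · rw [hV]; simp only [hφdef]
      rw [Set.indicator_of_mem h, Set.indicator_of_mem (by exact h)]
    · rw [hV]; simp only [hφdef]
      rw [Set.indicator_of_notMem h, Set.indicator_of_notMem (by exact h)]
  have hpre : ∀ i, MeasurableSet ((fun ω => (X i ω, Y i ω)) ⁻¹' B) :=
    fun i => hB.preimage ((hmX i).prodMk (hmY i))
  have hint : Integrable (V 0) ℙ := by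
    rw [hVind 0]
    exact (integrable_const (1:ℝ)).indicator (hpre 0)
  have hindep' : Pairwise (Function.onFun (IndepFun · · ℙ) V) := by
    intro i j hij
    exact (hindep.indepFun hij).comp hφ hφ
  have hident' : ∀ i, IdentDistrib (V i) (V 0) ℙ ℙ := fun i => (hident i).comp hφ
  have h := strong_law_ae V hint hindep' hident'
  have hE : (ℙ[V 0]) = (ℙ ((fun ω => (X 0 ω, Y 0 ω)) ⁻¹' B)).toReal := by
    rw [hVind 0, integral_indicator_const (1:ℝ) (hpre 0), smul_eq_mul, mul_one]
    rfl
  filter_upwards [h] with ω hω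
  have : (fun n => empAvg X Y B n ω)
      = fun n : ℕ => (n : ℝ)⁻¹ • ∑ i ∈ Finset.range n, V i ω := by
    funext n
    simp [empAvg, smul_eq_mul, hV, hφdef]
  rw [this, ← hE]
  exact hω

end SLLNAux



noncomputable section GeomAux


def bandSet (α β ρ : ℝ) : Set (ℝ × ℝ) :=
  {p : ℝ × ℝ | |p.1 * α + β - p.2| ≤ ρ * Real.sqrt (p.1 ^ 2 + 1)}

def E1set (T : ℝ) : Set (ℝ × ℝ) := {p : ℝ × ℝ | T < |p.1|}

def E2set (S : ℝ) : Set (ℝ × ℝ) := {p : ℝ × ℝ | S < |p.2|}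

def slabSet (C w : ℝ) : Set (ℝ × ℝ) := {p : ℝ × ℝ | p.1 ∈ Set.Ioo (C - w) (C + w) ∧ p.1 ≠ C}

def colSet (C u v : ℝ) : Set (ℝ × ℝ) := {p : ℝ × ℝ | p.1 = C ∧ p.2 ∈ Set.Icc u v}

def iooSet (q1 q2 : ℝ) : Set (ℝ × ℝ) := {p : ℝ × ℝ | p.1 ∈ Set.Ioo q1 q2}

lemma measurable_houghSet (r : ℝ) (θ : ℝ × ℝ) : MeasurableSet (houghSet r θ) := by
  apply measurableSet_le
  · fun_prop
  · fun_prop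

lemma measurable_bandSet (α β ρ : ℝ) : MeasurableSet (bandSet α β ρ) := by
  apply measurableSet_le
  · fun_prop
  · apply Measurable.mul measurable_const
    exact (measurable_fst.pow_const 2).add_const 1 |>.sqrt

lemma measurable_E1set (T : ℝ) : MeasurableSet (E1set T) :=
  measurableSet_lt measurable_const measurable_fst.abs

lemma measurable_E2set (S : ℝ) : MeasurableSet (E2set S) :=
  measurableSet_lt measurable_const measurable_snd.abs

lemma measurable_slabSet (C w : ℝ) : MeasurableSet (slabSet C w) := by
  have : slabSet C w = (Prod.fst ⁻¹' (Set.Ioo (C - w) (C + w))) ∩ (Prod.fst ⁻¹' {C})ᶜ := by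
    ext p; simp [slabSet]
  rw [this]
  exact (measurableSet_Ioo.preimage measurable_fst).inter
    ((measurableSet_singleton C).preimage measurable_fst).compl

lemma measurable_colSet (C u v : ℝ) : MeasurableSet (colSet C u v) := by
  have : colSet C u v = (Prod.fst ⁻¹' {C}) ∩ (Prod.snd ⁻¹' Set.Icc u v) := by
    ext p; simp [colSet]
  rw [this]
  exact ((measurableSet_singleton C).preimage measurable_fst).inter
    (measurableSet_Icc.preimage measurable_snd)

lemma measurable_iooSet (q1 q2 : ℝ) : MeasurableSet (iooSet q1 q2) :=
  measurableSet_Ioo.preimage measurable_fst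

lemma sq_le_iff_abs_le {ρ u x : ℝ} (hρ : 0 ≤ ρ) :
    u ^ 2 ≤ ρ ^ 2 * (x ^ 2 + 1) ↔ |u| ≤ ρ * Real.sqrt (x ^ 2 + 1) := by
  have h1 : (0:ℝ) ≤ x ^ 2 + 1 := by positivity
  have hs : Real.sqrt (x ^ 2 + 1) ^ 2 = x ^ 2 + 1 := Real.sq_sqrt h1
  have hsn : 0 ≤ Real.sqrt (x ^ 2 + 1) := Real.sqrt_nonneg _
  constructor
  · intro h
    have : |u| = Real.sqrt (u ^ 2) := (Real.sqrt_sq_eq_abs u).symm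
    rw [this]
    calc Real.sqrt (u ^ 2) ≤ Real.sqrt (ρ ^ 2 * (x ^ 2 + 1)) := Real.sqrt_le_sqrt h
      _ = ρ * Real.sqrt (x ^ 2 + 1) := by
          rw [Real.sqrt_mul (sq_nonneg ρ), Real.sqrt_sq hρ]
  · intro h
    have h2 : u ^ 2 = |u| ^ 2 := (sq_abs u).symm
    nlinarith [abs_nonneg u]

lemma mem_houghSet_iff {r : ℝ} (hr : 0 ≤ r) {θ : ℝ × ℝ} {p : ℝ × ℝ} :
    p ∈ houghSet r θ ↔ |p.1 * θ.1 + θ.2 - p.2| ≤ r * Real.sqrt (p.1 ^ 2 + 1) := by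
  unfold houghSet
  rw [Set.mem_setOf_eq, ← sq_le_iff_abs_le hr (u := p.1 * θ.1 + θ.2 - p.2) (x := p.1)]
  rw [sq_abs]

lemma one_le_sqrt_sq_add_one (x : ℝ) : 1 ≤ Real.sqrt (x ^ 2 + 1) := by
  have h := Real.sqrt_le_sqrt (show (1:ℝ) ≤ x ^ 2 + 1 by nlinarith)
  simpa using h

lemma sqrt_sq_add_one_le {x T : ℝ} (h : |x| ≤ T) :
    Real.sqrt (x ^ 2 + 1) ≤ Real.sqrt (T ^ 2 + 1) := by
  apply Real.sqrt_le_sqrt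
  have : x ^ 2 ≤ T ^ 2 := by nlinarith [abs_nonneg x, sq_abs x]
  linarith

/-- Inclusion for the case of a convergent parameter sequence. -/
lemma band_incl {r ρ T a b α β : ℝ} (hr : 0 ≤ r) (hT : 0 ≤ T)
    (h1 : |a - α| * (T + 1) ≤ (ρ - r) / 2) (h2 : |b - β| ≤ (ρ - r) / 2) :
    houghSet r (a, b) ⊆ E1set T ∪ bandSet α β ρ := by
  intro p hp
  rcases lt_or_ge T |p.1| with hx | hx
  · exact Or.inl hx
  right
  obtain ⟨x, y⟩ := p
  simp only at hx ⊢
  have habs : |x * a + b - y| ≤ r * Real.sqrt (x ^ 2 + 1) := (mem_houghSet_iff hr).mp hp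
  have hρr : 0 ≤ ρ - r := by nlinarith [abs_nonneg (a - α), abs_nonneg (b - β)]
  have hsq1 : 1 ≤ Real.sqrt (x ^ 2 + 1) := one_le_sqrt_sq_add_one x
  have key : |x * α + β - y| ≤ |x * a + b - y| + |x| * |a - α| + |b - β| := by
    have : x * α + β - y = (x * a + b - y) + (x * (α - a) + (β - b)) := by ring
    rw [this]
    calc |(x * a + b - y) + (x * (α - a) + (β - b))|
        ≤ |x * a + b - y| + |x * (α - a) + (β - b)| := abs_add_le _ _
      _ ≤ |x * a + b - y| + (|x * (α - a)| + |β - b|) := by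
          have := abs_add_le (x * (α - a)) (β - b); linarith
      _ = |x * a + b - y| + |x| * |a - α| + |b - β| := by
          rw [abs_mul, abs_sub_comm α a, abs_sub_comm β b]; ring
  show |x * α + β - y| ≤ ρ * Real.sqrt (x ^ 2 + 1)
  have hxa : |x| * |a - α| ≤ (ρ - r) / 2 := by
    have : |x| * |a - α| ≤ (T + 1) * |a - α| := by
      apply mul_le_mul_of_nonneg_right _ (abs_nonneg _)
      linarith
    nlinarith [abs_nonneg (a - α)]
  have : |x * α + β - y| ≤ r * Real.sqrt (x ^ 2 + 1) + (ρ - r) := by linarith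
  calc |x * α + β - y| ≤ r * Real.sqrt (x ^ 2 + 1) + (ρ - r) := this
    _ ≤ r * Real.sqrt (x ^ 2 + 1) + (ρ - r) * Real.sqrt (x ^ 2 + 1) := by nlinarith
    _ = ρ * Real.sqrt (x ^ 2 + 1) := by ring

/-- Inclusion for a steep line near the atom column `C`. -/
lemma steep_incl {r T S C w a b cn κ t' : ℝ} (hr : 0 ≤ r) (ha : a ≠ 0)
    (hcn : a * cn = -b)
    (hd : (r * Real.sqrt (T ^ 2 + 1) + S) / |a| + |cn - C| < w)
    (hth : |a * C + b - t'| ≤ κ) :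
    houghSet r (a, b) ⊆ E1set T ∪ E2set S ∪ slabSet C w ∪
      colSet C (t' - (r * Real.sqrt (C ^ 2 + 1) + κ)) (t' + (r * Real.sqrt (C ^ 2 + 1) + κ)) := by
  intro p hp
  rcases lt_or_ge T |p.1| with hx | hx
  · exact Or.inl (Or.inl (Or.inl hx))
  rcases lt_or_ge S |p.2| with hy | hy
  · exact Or.inl (Or.inl (Or.inr hy))
  obtain ⟨x, y⟩ := p
  simp only at hx hy
  have habs : |x * a + b - y| ≤ r * Real.sqrt (x ^ 2 + 1) := (mem_houghSet_iff hr).mp hp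
  have hRa : |x * a + b - y| ≤ r * Real.sqrt (T ^ 2 + 1) :=
    habs.trans (by
      apply mul_le_mul_of_nonneg_left _ hr
      exact sqrt_sq_add_one_le hx)
  have hapos : 0 < |a| := abs_pos.mpr ha
  have hxc : |x - cn| ≤ (r * Real.sqrt (T ^ 2 + 1) + S) / |a| := by
    rw [le_div_iff₀ hapos]
    have : |x - cn| * |a| = |a * x + b| := by
      rw [← abs_mul]
      congr 1
      have : a * cn = -b := hcn
      nlinarith [this]
    rw [this]
    calc |a * x + b| = |(x * a + b - y) + y| := by ring_nf
      _ ≤ |x * a + b - y| + |y| := abs_add_le _ _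
      _ ≤ r * Real.sqrt (T ^ 2 + 1) + S := by linarith
  have hxC : |x - C| < w := by
    calc |x - C| ≤ |x - cn| + |cn - C| := abs_sub_le x cn C
      _ < w := by linarith
  by_cases hxeq : x = C
  · right
    subst hxeq
    refine ⟨rfl, ?_⟩
    have hyx : |y - (a * x + b)| ≤ r * Real.sqrt (x ^ 2 + 1) := by
      rw [abs_sub_comm]
      have he : a * x + b - y = x * a + b - y := by ring
      rw [he]
      exact habs
    have h2 : |y - t'| ≤ r * Real.sqrt (x ^ 2 + 1) + κ := by
      have he : y - t' = (y - (a * x + b)) + (a * x + b - t') := by ring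
      rw [he]
      calc |(y - (a * x + b)) + (a * x + b - t')|
          ≤ |y - (a * x + b)| + |a * x + b - t'| := abs_add_le _ _
        _ ≤ r * Real.sqrt (x ^ 2 + 1) + κ := by linarith [hth]
    rw [abs_le] at h2
    constructor <;> [linarith [h2.1]; linarith [h2.2]]
  · left; right
    exact ⟨⟨by cases abs_lt.mp hxC with | intro h1 h2 => linarith,
           by cases abs_lt.mp hxC with | intro h1 h2 => linarith⟩, hxeq⟩

/-- Steep line, column value escaping to infinity. -/
lemma steep_incl_noCol {r T S C w a b cn : ℝ} (hr : 0 ≤ r) (ha : a ≠ 0)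
    (hcn : a * cn = -b)
    (hd : (r * Real.sqrt (T ^ 2 + 1) + S) / |a| + |cn - C| < w)
    (hfar : S + r * Real.sqrt (C ^ 2 + 1) < |a * C + b|) :
    houghSet r (a, b) ⊆ E1set T ∪ E2set S ∪ slabSet C w := by
  intro p hp
  rcases lt_or_ge T |p.1| with hx | hx
  · exact Or.inl (Or.inl hx)
  rcases lt_or_ge S |p.2| with hy | hy
  · exact Or.inl (Or.inr hy)
  obtain ⟨x, y⟩ := p
  simp only at hx hy
  have habs : |x * a + b - y| ≤ r * Real.sqrt (x ^ 2 + 1) := (mem_houghSet_iff hr).mp hp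
  have hapos : 0 < |a| := abs_pos.mpr ha
  have hxc : |x - cn| ≤ (r * Real.sqrt (T ^ 2 + 1) + S) / |a| := by
    rw [le_div_iff₀ hapos]
    have h0 : |x - cn| * |a| = |a * x + b| := by
      rw [← abs_mul]; congr 1; nlinarith [hcn]
    rw [h0]
    have h1 : |a * x + b| = |(x * a + b - y) + y| := by ring_nf
    rw [h1]
    calc |(x * a + b - y) + y| ≤ |x * a + b - y| + |y| := abs_add_le _ _
      _ ≤ r * Real.sqrt (T ^ 2 + 1) + S := by
          have := habs.trans (mul_le_mul_of_nonneg_left (sqrt_sq_add_one_le hx) hr)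
          linarith
  have hxC : |x - C| < w := by
    calc |x - C| ≤ |x - cn| + |cn - C| := abs_sub_le x cn C
      _ < w := by linarith
  by_cases hxeq : x = C
  · exfalso
    subst hxeq
    have hyx : |y - (a * x + b)| ≤ r * Real.sqrt (x ^ 2 + 1) := by
      rw [abs_sub_comm]
      have he : a * x + b - y = x * a + b - y := by ring
      rw [he]; exact habs
    have : |a * x + b| ≤ |y| + r * Real.sqrt (x ^ 2 + 1) := by
      have he : a * x + b = y - (y - (a * x + b)) := by ring
      rw [he]
      calc |y - (y - (a * x + b))| ≤ |y| + |y - (a * x + b)| := abs_sub _ _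
        _ ≤ |y| + r * Real.sqrt (x ^ 2 + 1) := by linarith
    linarith
  · right
    exact ⟨⟨by cases abs_lt.mp hxC with | intro h1 h2 => linarith,
           by cases abs_lt.mp hxC with | intro h1 h2 => linarith⟩, hxeq⟩

/-- Steep line near a non-atomic column. -/
lemma steep_incl_ioo {r T S C w a b cn q1 q2 : ℝ} (hr : 0 ≤ r) (ha : a ≠ 0)
    (hcn : a * cn = -b)
    (hd : (r * Real.sqrt (T ^ 2 + 1) + S) / |a| + |cn - C| < w)
    (hq1 : q1 ≤ C - w) (hq2 : C + w ≤ q2) :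
    houghSet r (a, b) ⊆ E1set T ∪ E2set S ∪ iooSet q1 q2 := by
  intro p hp
  rcases lt_or_ge T |p.1| with hx | hx
  · exact Or.inl (Or.inl hx)
  rcases lt_or_ge S |p.2| with hy | hy
  · exact Or.inl (Or.inr hy)
  obtain ⟨x, y⟩ := p
  simp only at hx hy
  have habs : |x * a + b - y| ≤ r * Real.sqrt (x ^ 2 + 1) := (mem_houghSet_iff hr).mp hp
  have hapos : 0 < |a| := abs_pos.mpr ha
  have hxc : |x - cn| ≤ (r * Real.sqrt (T ^ 2 + 1) + S) / |a| := by
    rw [le_div_iff₀ hapos]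
    have h0 : |x - cn| * |a| = |a * x + b| := by
      rw [← abs_mul]; congr 1; nlinarith [hcn]
    rw [h0]
    have h1 : |a * x + b| = |(x * a + b - y) + y| := by ring_nf
    rw [h1]
    calc |(x * a + b - y) + y| ≤ |x * a + b - y| + |y| := abs_add_le _ _
      _ ≤ r * Real.sqrt (T ^ 2 + 1) + S := by
          have := habs.trans (mul_le_mul_of_nonneg_left (sqrt_sq_add_one_le hx) hr)
          linarith
  have hxC : |x - C| < w := by
    calc |x - C| ≤ |x - cn| + |cn - C| := abs_sub_le x cn C
      _ < w := by linarith
  right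
  cases abs_lt.mp hxC with
  | intro h1 h2 => exact ⟨by linarith, by linarith⟩

/-- Far intercept: the band misses the box. -/
lemma far_b_incl {r T S a b Ma : ℝ} (hr : 0 ≤ r) (hMa : |a| ≤ Ma)
    (hfar : r * Real.sqrt (T ^ 2 + 1) + Ma * T + S < |b|) (hT : 0 ≤ T) :
    houghSet r (a, b) ⊆ E1set T ∪ E2set S := by
  intro p hp
  rcases lt_or_ge T |p.1| with hx | hx
  · exact Or.inl hx
  rcases lt_or_ge S |p.2| with hy | hy
  · exact Or.inr hy
  exfalso
  obtain ⟨x, y⟩ := p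
  simp only at hx hy
  have habs : |x * a + b - y| ≤ r * Real.sqrt (x ^ 2 + 1) := (mem_houghSet_iff hr).mp hp
  have hR : |x * a + b - y| ≤ r * Real.sqrt (T ^ 2 + 1) :=
    habs.trans (mul_le_mul_of_nonneg_left (sqrt_sq_add_one_le hx) hr)
  have h1 : |b| ≤ |x * a + b - y| + |x| * |a| + |y| := by
    have he : b = (x * a + b - y) + (-(x * a)) + y := by ring
    calc |b| = |(x * a + b - y) + (-(x * a)) + y| := by rw [← he]
      _ ≤ |(x * a + b - y) + (-(x * a))| + |y| := abs_add_le _ _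
      _ ≤ |x * a + b - y| + |(-(x * a))| + |y| := by linarith [abs_add_le (x * a + b - y) (-(x * a))]
      _ = |x * a + b - y| + |x| * |a| + |y| := by rw [abs_neg, abs_mul]
  have h2 : |x| * |a| ≤ Ma * T := by
    calc |x| * |a| ≤ T * Ma := by
          apply mul_le_mul hx hMa (abs_nonneg a) hT
      _ = Ma * T := by ring
  linarith

/-- Vertical line far away: the band misses the box. -/
lemma far_c_incl {r T S a b cn : ℝ} (hr : 0 ≤ r) (ha : a ≠ 0)
    (hcn : a * cn = -b) (haM : r * Real.sqrt (T ^ 2 + 1) + S ≤ |a|)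
    (hfar : T + 1 < |cn|) :
    houghSet r (a, b) ⊆ E1set T ∪ E2set S := by
  intro p hp
  rcases lt_or_ge T |p.1| with hx | hx
  · exact Or.inl hx
  rcases lt_or_ge S |p.2| with hy | hy
  · exact Or.inr hy
  exfalso
  obtain ⟨x, y⟩ := p
  simp only at hx hy
  have habs : |x * a + b - y| ≤ r * Real.sqrt (x ^ 2 + 1) := (mem_houghSet_iff hr).mp hp
  have hapos : 0 < |a| := abs_pos.mpr ha
  have hxc : |x - cn| ≤ (r * Real.sqrt (T ^ 2 + 1) + S) / |a| := by
    rw [le_div_iff₀ hapos]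
    have h0 : |x - cn| * |a| = |a * x + b| := by
      rw [← abs_mul]; congr 1; nlinarith [hcn]
    rw [h0]
    have h1 : |a * x + b| = |(x * a + b - y) + y| := by ring_nf
    rw [h1]
    calc |(x * a + b - y) + y| ≤ |x * a + b - y| + |y| := abs_add_le _ _
      _ ≤ r * Real.sqrt (T ^ 2 + 1) + S := by
          have := habs.trans (mul_le_mul_of_nonneg_left (sqrt_sq_add_one_le hx) hr)
          linarith
  have h2 : |x - cn| ≤ 1 := hxc.trans (by rw [div_le_one hapos]; exact haM)
  have : |cn| ≤ |x| + 1 := by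
    have := abs_sub_le cn x x  -- junk; do directly
    have h3 : |cn| = |x - (x - cn)| := by congr 1; ring
    rw [h3]
    calc |x - (x - cn)| ≤ |x| + |x - cn| := abs_sub _ _
      _ ≤ |x| + 1 := by linarith
  linarith

end GeomAux



noncomputable section MeasAux

variable {Ω : Type*} [MeasureSpace Ω] [IsProbabilityMeasure (ℙ : Measure Ω)]
  (X0 e : Ω → ℝ) (hmX0 : Measurable X0) (hme : Measurable e)
  (hXe : IndepFun X0 e ℙ)

include hmX0 hme hXe in
lemma prod_fact : Measure.map (fun ω => (X0 ω, e ω)) ℙ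
    = (Measure.map X0 ℙ).prod (Measure.map e ℙ) :=
  (indepFun_iff_map_prod_eq_prod_map_map hmX0.aemeasurable hme.aemeasurable).mp hXe

include hmX0 hme hXe in
lemma band_measure_le
    (hshift : ∀ c L : ℝ, 0 ≤ L →
      (Measure.map e ℙ) (Set.Icc (c - L) (c + L)) ≤ (Measure.map e ℙ) (Set.Icc (-L) L))
    (c L : ℝ → ℝ) (hc : Measurable c) (hL : Measurable L) (hLpos : ∀ x, 0 ≤ L x) :
    ℙ {ω | |c (X0 ω) - e ω| ≤ L (X0 ω)} ≤ ℙ {ω | |e ω| ≤ L (X0 ω)} := by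
  haveI : IsProbabilityMeasure (Measure.map e ℙ) := Measure.isProbabilityMeasure_map hme.aemeasurable
  haveI : IsProbabilityMeasure (Measure.map X0 ℙ) := Measure.isProbabilityMeasure_map hmX0.aemeasurable
  set E1 : Set (ℝ × ℝ) := {q | |c q.1 - q.2| ≤ L q.1} with hE1
  set E2 : Set (ℝ × ℝ) := {q | |q.2| ≤ L q.1} with hE2
  have hmE1 : MeasurableSet E1 :=
    measurableSet_le ((hc.comp measurable_fst).sub measurable_snd).abs (hL.comp measurable_fst)
  have hmE2 : MeasurableSet E2 :=
    measurableSet_le measurable_snd.abs (hL.comp measurable_fst)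
  have hpair : Measurable (fun ω => (X0 ω, e ω)) := hmX0.prodMk hme
  have h1 : ℙ {ω | |c (X0 ω) - e ω| ≤ L (X0 ω)}
      = ∫⁻ x, (Measure.map e ℙ) (Prod.mk x ⁻¹' E1) ∂(Measure.map X0 ℙ) := by
    have : {ω | |c (X0 ω) - e ω| ≤ L (X0 ω)} = (fun ω => (X0 ω, e ω)) ⁻¹' E1 := rfl
    rw [this, ← Measure.map_apply hpair hmE1, prod_fact X0 e hmX0 hme hXe,
      Measure.prod_apply hmE1]
  have h2 : ℙ {ω | |e ω| ≤ L (X0 ω)}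
      = ∫⁻ x, (Measure.map e ℙ) (Prod.mk x ⁻¹' E2) ∂(Measure.map X0 ℙ) := by
    have : {ω | |e ω| ≤ L (X0 ω)} = (fun ω => (X0 ω, e ω)) ⁻¹' E2 := rfl
    rw [this, ← Measure.map_apply hpair hmE2, prod_fact X0 e hmX0 hme hXe,
      Measure.prod_apply hmE2]
  rw [h1, h2]
  apply lintegral_mono
  intro x
  have hs1 : Prod.mk x ⁻¹' E1 = Set.Icc (c x - L x) (c x + L x) := by
    ext t
    simp only [Set.mem_preimage, hE1, Set.mem_setOf_eq, Set.mem_Icc, abs_le]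
    constructor <;> rintro ⟨ha, hb⟩ <;> constructor <;> linarith
  have hs2 : Prod.mk x ⁻¹' E2 = Set.Icc (-(L x)) (L x) := by
    ext t
    simp only [Set.mem_preimage, hE2, Set.mem_setOf_eq, Set.mem_Icc, abs_le]
  show (Measure.map e ℙ) (Prod.mk x ⁻¹' E1) ≤ (Measure.map e ℙ) (Prod.mk x ⁻¹' E2)
  rw [hs1, hs2]
  exact hshift (c x) (L x) (hLpos x)

include hmX0 hme hXe in
lemma col_measure_eq (C u v : ℝ) :
    ℙ {ω | X0 ω = C ∧ e ω ∈ Set.Icc u v}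
      = (Measure.map X0 ℙ) {C} * (Measure.map e ℙ) (Set.Icc u v) := by
  have hpair : Measurable (fun ω => (X0 ω, e ω)) := hmX0.prodMk hme
  have hset : {ω | X0 ω = C ∧ e ω ∈ Set.Icc u v}
      = (fun ω => (X0 ω, e ω)) ⁻¹' (({C} : Set ℝ) ×ˢ Set.Icc u v) := by
    ext ω; simp [Set.mem_prod]
  rw [hset, ← Measure.map_apply hpair ((measurableSet_singleton C).prod measurableSet_Icc),
    prod_fact X0 e hmX0 hme hXe, Measure.prod_prod]

end MeasAux

/-- Under the linear model with i.i.d. observations, the maximal value of the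
empirical Hough objective converges almost surely to the maximal value of its
deterministic counterpart: `sup_θ M_{r,n}(θ) → M_r(θ₀) = P{ε² ≤ r²‖Z‖²}` a.s.,
where `Z = (X, 1)ᵀ`. -/
theorem hough_max_value_strong_convergence
    {Ω : Type*} [MeasureSpace Ω] [IsProbabilityMeasure (ℙ : Measure Ω)]
    (X Y : ℕ → Ω → ℝ) (hmX : ∀ i, Measurable (X i)) (hmY : ∀ i, Measurable (Y i))
    (hindep : iIndepFun (fun i ω => (X i ω, Y i ω)) ℙ)
    (hident : ∀ i, IdentDistrib (fun ω => (X i ω, Y i ω)) (fun ω => (X 0 ω, Y 0 ω)) ℙ ℙ)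
    (a0 b0 : ℝ) (ε : Ω → ℝ) (hmε : Measurable ε)
    (hmodel : ∀ ω, Y 0 ω = a0 * X 0 ω + b0 + ε ω)
    (hXε : IndepFun (X 0) ε ℙ)
    (f : ℝ → ℝ)
    (hdens : Measure.map ε ℙ = volume.withDensity (fun x => ENNReal.ofReal (f x)))
    (hbdd : ∃ C : ℝ, ∀ x, f x ≤ C)
    (hsymm : ∀ x, f x = f (-x))
    (hmode : ∀ x : ℝ, x ≠ 0 → f x < f 0)
    (hanti : StrictAntiOn f (Set.Ioi (0 : ℝ)))
    (r : ℝ) (hr : 0 < r)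
    (Mn : ℕ → ℝ × ℝ → Ω → ℝ)
    (hMn : ∀ n θ ω, Mn n θ ω = (n : ℝ)⁻¹ * ∑ i ∈ Finset.range n,
      Set.indicator {p : ℝ × ℝ | |p.1 * θ.1 + θ.2 - p.2| ^ 2 ≤ r ^ 2 * (p.1 ^ 2 + 1)}
        (fun _ => (1 : ℝ)) (X i ω, Y i ω)) :
    ∀ᵐ ω ∂ℙ, Tendsto (fun n => ⨆ θ : ℝ × ℝ, Mn n θ ω) atTop
      (nhds ((ℙ {ω' | ε ω' ^ 2 ≤ r ^ 2 * (X 0 ω' ^ 2 + 1)}).toReal)) := by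
  classical
  obtain ⟨Cb, hCb⟩ := hbdd
  set Cf : ℝ := max Cb 0 with hCfdef
  have hCf0 : 0 ≤ Cf := le_max_right _ _
  have hfCf : ∀ x, f x ≤ Cf := fun x => (hCb x).trans (le_max_left _ _)
  -- normalize the density
  have hsymm' : ∀ x : ℝ, f x = f |x| := by
    intro x
    rcases le_or_gt 0 x with h | h
    · rw [abs_of_nonneg h]
    · rw [abs_of_neg h]; exact hsymm x
  have hmono : ∀ u v : ℝ, 0 ≤ u → u ≤ v → f v ≤ f u := by
    intro u v hu huv
    rcases eq_or_lt_of_le huv with rfl | hlt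
    · exact le_refl _
    rcases eq_or_lt_of_le hu with rfl | hu'
    · exact (hmode v (ne_of_gt hlt)).le
    · exact (hanti hu' (lt_trans hu' hlt) hlt).le
  set g : ℝ → ENNReal := fun x => ENNReal.ofReal (f |x|) with hgdef
  have hgeq : (fun x => ENNReal.ofReal (f x)) = g := by
    funext x
    rw [hgdef]
    simp only []
    rw [← hsymm' x]
  have hganti : Antitone (fun u : ℝ => f (max u 0)) := by
    intro u v huv
    exact hmono (max u 0) (max v 0) (le_max_right _ _) (max_le_max huv le_rfl)
  have hgmeas : Measurable g := by
    have hfeq : g = fun x => ENNReal.ofReal ((fun u => f (max u 0)) |x|) := by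
      funext x
      rw [hgdef]
      simp only []
      rw [max_eq_left (abs_nonneg x)]
    rw [hfeq]
    exact ENNReal.measurable_ofReal.comp (hganti.measurable.comp measurable_abs)
  have hgsym : ∀ x : ℝ, g (-x) = g x := fun x => by rw [hgdef]; simp [abs_neg]
  have hgmon : ∀ x y : ℝ, |x| ≤ |y| → g y ≤ g x := by
    intro x y h
    rw [hgdef]
    exact ENNReal.ofReal_le_ofReal (hmono |x| |y| (abs_nonneg x) h)
  -- the law of ε
  set ν : Measure ℝ := Measure.map ε ℙ with hνdef
  haveI : IsProbabilityMeasure ν := Measure.isProbabilityMeasure_map hmε.aemeasurable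
  have hνg : ν = volume.withDensity g := by rw [hdens, hgeq]
  have hshift : ∀ c L : ℝ, 0 ≤ L → ν (Set.Icc (c - L) (c + L)) ≤ ν (Set.Icc (-L) L) := by
    intro c L hL
    rw [hνg, withDensity_apply _ measurableSet_Icc, withDensity_apply _ measurableSet_Icc]
    exact unimodal_shift g hgmeas hgsym hgmon c L hL
  have hνIcc : ∀ u v : ℝ, u ≤ v → ν (Set.Icc u v) ≤ ENNReal.ofReal (Cf * (v - u)) := by
    intro u v huv
    rw [hνg, withDensity_apply _ measurableSet_Icc]
    calc ∫⁻ x in Set.Icc u v, g x ∂volume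
        ≤ ∫⁻ _x in Set.Icc u v, ENNReal.ofReal Cf ∂volume :=
          setLIntegral_mono measurable_const (fun x _ => ENNReal.ofReal_le_ofReal (hfCf _))
      _ = ENNReal.ofReal Cf * volume (Set.Icc u v) := setLIntegral_const _ _
      _ ≤ ENNReal.ofReal (Cf * (v - u)) := by
          rw [Real.volume_Icc, ← ENNReal.ofReal_mul hCf0]
  -- notation
  set pair0 : Ω → ℝ × ℝ := fun ω => (X 0 ω, Y 0 ω) with hpair0
  set P0 : ENNReal := ℙ {ω' | ε ω' ^ 2 ≤ r ^ 2 * (X 0 ω' ^ 2 + 1)} with hP0def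
  set mstar : ℝ := P0.toReal with hmstardef
  have hP0top : P0 ≠ ⊤ := (measure_lt_top _ _).ne
  have hmstar0 : 0 ≤ mstar := ENNReal.toReal_nonneg
  have hA0set : pair0 ⁻¹' houghSet r (a0, b0) = {ω' | ε ω' ^ 2 ≤ r ^ 2 * (X 0 ω' ^ 2 + 1)} := by
    ext ω'
    have h1 : X 0 ω' * a0 + b0 - Y 0 ω' = -(ε ω') := by rw [hmodel ω']; ring
    simp only [hpair0, Set.mem_preimage, houghSet, Set.mem_setOf_eq, h1, abs_neg, sq_abs, neg_sq]
  -- countable family of a.s. events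
  set AtomS : Set ℝ := {t : ℝ | 0 < ℙ {a | X 0 a = t}} with hAtomS
  have hAcnt : AtomS.Countable := Measure.countable_meas_level_set_pos (hmX 0)
  haveI : Countable AtomS := hAcnt.to_subtype
  have H_band := ae_all_iff.mpr fun q : ℚ × ℚ × ℚ =>
    emp_slln X Y hmX hmY hindep hident (bandSet q.1 q.2.1 q.2.2) (measurable_bandSet _ _ _)
  have H_E1 := ae_all_iff.mpr fun T : ℕ =>
    emp_slln X Y hmX hmY hindep hident (E1set T) (measurable_E1set _)
  have H_E2 := ae_all_iff.mpr fun S : ℕ =>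
    emp_slln X Y hmX hmY hindep hident (E2set S) (measurable_E2set _)
  have H_ioo := ae_all_iff.mpr fun q : ℚ × ℚ =>
    emp_slln X Y hmX hmY hindep hident (iooSet q.1 q.2) (measurable_iooSet _ _)
  have H_slab := ae_all_iff.mpr fun q : AtomS × ℚ =>
    emp_slln X Y hmX hmY hindep hident (slabSet q.1 q.2) (measurable_slabSet _ _)
  have H_col := ae_all_iff.mpr fun q : AtomS × ℚ × ℚ =>
    emp_slln X Y hmX hmY hindep hident (colSet q.1 q.2.1 q.2.2) (measurable_colSet _ _ _)
  have H_A0 := emp_slln X Y hmX hmY hindep hident (houghSet r (a0, b0))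
    (measurable_houghSet _ _)
  filter_upwards [H_band, H_E1, H_E2, H_ioo, H_slab, H_col, H_A0] with ω hband hE1 hE2 hioo
    hslab hcol hA0slln
  -- pathwise notation
  have hMn' : ∀ n θ, Mn n θ ω = empAvg X Y (houghSet r θ) n ω := by
    intro n θ
    rw [hMn]
    rfl
  rw [hA0set] at hA0slln
  have hbddA : ∀ n, BddAbove (Set.range fun θ : ℝ × ℝ => Mn n θ ω) := by
    intro n
    refine ⟨1, ?_⟩
    rintro _ ⟨θ, rfl⟩
    exact le_of_eq_of_le (hMn' n θ) (empAvg_le_one X Y _ n ω)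
  have hsup_ge : ∀ n, empAvg X Y (houghSet r (a0, b0)) n ω ≤ ⨆ θ : ℝ × ℝ, Mn n θ ω := by
    intro n
    have h := le_ciSup (hbddA n) ((a0, b0) : ℝ × ℝ)
    rwa [hMn'] at h
  have hsup_le1 : ∀ n, (⨆ θ : ℝ × ℝ, Mn n θ ω) ≤ 1 := fun n =>
    ciSup_le fun θ => le_of_eq_of_le (hMn' n θ) (empAvg_le_one X Y _ n ω)
  have hsup_ge0 : ∀ n, 0 ≤ ⨆ θ : ℝ × ℝ, Mn n θ ω := fun n =>
    le_trans (empAvg_nonneg X Y _ n ω) (hsup_ge n)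
  have hBddU : IsBoundedUnder (· ≤ ·) atTop (fun n => ⨆ θ : ℝ × ℝ, Mn n θ ω) :=
    isBoundedUnder_of ⟨1, hsup_le1⟩
  have hBddL : IsBoundedUnder (· ≥ ·) atTop (fun n => ⨆ θ : ℝ × ℝ, Mn n θ ω) :=
    isBoundedUnder_of ⟨0, hsup_ge0⟩
  -- the upper bound: this is the main work
  have hub : ∀ δ : ℝ, 0 < δ →
      limsup (fun n => ⨆ θ : ℝ × ℝ, Mn n θ ω) atTop ≤ mstar + δ := by
    intro δ hδ
    by_contra hcon
    push_neg at hcon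
    have hfreq : ∃ᶠ n in atTop, mstar + δ < ⨆ θ : ℝ × ℝ, Mn n θ ω :=
      frequently_lt_of_lt_limsup hBddL.isCoboundedUnder_le hcon
    have hne : (atTop ⊓ 𝓟 {n | mstar + δ < ⨆ θ : ℝ × ℝ, Mn n θ ω}).NeBot :=
      frequently_iff_neBot.mp hfreq
    set U : Ultrafilter ℕ := Ultrafilter.of (atTop ⊓ 𝓟 {n | mstar + δ < ⨆ θ : ℝ × ℝ, Mn n θ ω})
      with hUdef
    have hUle : (U : Filter ℕ) ≤ atTop ⊓ 𝓟 {n | mstar + δ < ⨆ θ : ℝ × ℝ, Mn n θ ω} :=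
      Ultrafilter.of_le _
    have hUtop : (U : Filter ℕ) ≤ atTop := hUle.trans inf_le_left
    have hUS : ∀ᶠ n in (U : Filter ℕ), mstar + δ < ⨆ θ : ℝ × ℝ, Mn n θ ω :=
      le_principal_iff.mp (hUle.trans inf_le_right)
    have hchoice : ∀ n : ℕ, ∃ θ : ℝ × ℝ,
        ((mstar + δ < ⨆ θ' : ℝ × ℝ, Mn n θ' ω) →
          mstar + δ < empAvg X Y (houghSet r θ) n ω) := by
      intro n
      by_cases h : mstar + δ < ⨆ θ' : ℝ × ℝ, Mn n θ' ω
      · obtain ⟨θ, hθ⟩ := exists_lt_of_lt_ciSup h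
        exact ⟨θ, fun _ => lt_of_lt_of_eq hθ (hMn' n θ)⟩
      · exact ⟨(a0, b0), fun hc => absurd hc h⟩
    choose θf hθf using hchoice
    have hUgt : ∀ᶠ n in (U : Filter ℕ), mstar + δ < empAvg X Y (houghSet r (θf n)) n ω :=
      hUS.mono fun n hn => hθf n hn
    set an : ℕ → ℝ := fun n => (θf n).1 with handef
    set bn : ℕ → ℝ := fun n => (θf n).2 with hbndef
    have hθfab : ∀ n, θf n = (an n, bn n) := fun n => rfl
    -- empty-set empirical limit
    have hempty : Tendsto (fun n => empAvg X Y (∅ : Set (ℝ × ℝ)) n ω) atTop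
        (𝓝 ((ℙ (pair0 ⁻¹' (∅ : Set (ℝ × ℝ)))).toReal)) := by
      have hz : (fun n => empAvg X Y (∅ : Set (ℝ × ℝ)) n ω) = fun _ => (0:ℝ) := by
        funext n; simp [empAvg]
      rw [hz]
      simp only [Set.preimage_empty, measure_empty, ENNReal.toReal_zero]
      exact tendsto_const_nhds
    -- the master contradiction device
    have key : ∀ B1 B2 B3 B4 : Set (ℝ × ℝ),
        Tendsto (fun n => empAvg X Y B1 n ω) atTop (𝓝 ((ℙ (pair0 ⁻¹' B1)).toReal)) →
        Tendsto (fun n => empAvg X Y B2 n ω) atTop (𝓝 ((ℙ (pair0 ⁻¹' B2)).toReal)) →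
        Tendsto (fun n => empAvg X Y B3 n ω) atTop (𝓝 ((ℙ (pair0 ⁻¹' B3)).toReal)) →
        Tendsto (fun n => empAvg X Y B4 n ω) atTop (𝓝 ((ℙ (pair0 ⁻¹' B4)).toReal)) →
        ((ℙ (pair0 ⁻¹' B1)).toReal + (ℙ (pair0 ⁻¹' B2)).toReal + (ℙ (pair0 ⁻¹' B3)).toReal
          + (ℙ (pair0 ⁻¹' B4)).toReal ≤ mstar + δ / 2) →
        (∀ᶠ n in (U : Filter ℕ), houghSet r (θf n) ⊆ B1 ∪ B2 ∪ B3 ∪ B4) → False := by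
      intro B1 B2 B3 B4 h1 h2 h3 h4 hsum hincl
      have hsum_t : Tendsto (fun n => empAvg X Y B1 n ω + empAvg X Y B2 n ω
          + empAvg X Y B3 n ω + empAvg X Y B4 n ω) (U : Filter ℕ)
          (𝓝 ((ℙ (pair0 ⁻¹' B1)).toReal + (ℙ (pair0 ⁻¹' B2)).toReal
            + (ℙ (pair0 ⁻¹' B3)).toReal + (ℙ (pair0 ⁻¹' B4)).toReal)) :=
        (((h1.add h2).add h3).add h4).mono_left hUtop
      have hev : ∀ᶠ n in (U : Filter ℕ), mstar + δ ≤ empAvg X Y B1 n ω + empAvg X Y B2 n ω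
          + empAvg X Y B3 n ω + empAvg X Y B4 n ω := by
        filter_upwards [hincl, hUgt] with n hi hgt
        exact le_trans hgt.le (empAvg_le_sum4 X Y _ B1 B2 B3 B4 hi n ω)
      have hfin : mstar + δ ≤ (ℙ (pair0 ⁻¹' B1)).toReal + (ℙ (pair0 ⁻¹' B2)).toReal
          + (ℙ (pair0 ⁻¹' B3)).toReal + (ℙ (pair0 ⁻¹' B4)).toReal :=
        ge_of_tendsto hsum_t hev
      linarith
    -- tail set choices
    have tail_pick : ∀ (F : Ω → ℝ), Measurable F →
        ∃ T : ℕ, (ℙ {ω' | (T:ℝ) < |F ω'|}).toReal ≤ δ/8 := by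
      intro F hF
      have hmeasT : ∀ T : ℕ, NullMeasurableSet {ω' | (T:ℝ) < |F ω'|} ℙ :=
        fun T => (measurableSet_lt measurable_const hF.abs).nullMeasurableSet
      have hantiT : Antitone (fun T : ℕ => {ω' | (T:ℝ) < |F ω'|}) := by
        intro T1 T2 h12 ω' h
        simp only [Set.mem_setOf_eq] at h ⊢
        calc ((T1:ℝ)) ≤ (T2:ℝ) := by exact_mod_cast h12
          _ < |F ω'| := h
      have hintT : ⋂ T : ℕ, {ω' | (T:ℝ) < |F ω'|} = ∅ := by
        ext ω'
        simp only [Set.mem_iInter, Set.mem_setOf_eq, Set.mem_empty_iff_false, iff_false,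
          not_forall, not_lt]
        obtain ⟨T, hT⟩ := exists_nat_gt |F ω'|
        exact ⟨T, hT.le⟩
      have htend := tendsto_measure_iInter_atTop hmeasT hantiT ⟨0, measure_ne_top _ _⟩
      rw [hintT, measure_empty] at htend
      have hpos : (0:ENNReal) < ENNReal.ofReal (δ/8) := ENNReal.ofReal_pos.mpr (by linarith)
      obtain ⟨T, hT⟩ := (htend.eventually_lt_const hpos).exists
      refine ⟨T, ?_⟩
      have := ENNReal.toReal_mono ENNReal.ofReal_ne_top hT.le
      rwa [ENNReal.toReal_ofReal (by linarith : (0:ℝ) ≤ δ/8)] at this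
    obtain ⟨T, hTtail⟩ := tail_pick (X 0) (hmX 0)
    obtain ⟨S0, hStail⟩ := tail_pick (Y 0) (hmY 0)
    have hE1val : (ℙ (pair0 ⁻¹' E1set (T:ℝ))).toReal ≤ δ/8 := by
      have : pair0 ⁻¹' E1set (T:ℝ) = {ω' | (T:ℝ) < |X 0 ω'|} := rfl
      rw [this]; exact hTtail
    have hE2val : (ℙ (pair0 ⁻¹' E2set (S0:ℝ))).toReal ≤ δ/8 := by
      have : pair0 ⁻¹' E2set (S0:ℝ) = {ω' | (S0:ℝ) < |Y 0 ω'|} := rfl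
      rw [this]; exact hStail
    -- band radius choice
    have hP0alt : {ω' | ε ω' ^ 2 ≤ r ^ 2 * (X 0 ω' ^ 2 + 1)}
        = {ω' | |ε ω'| ≤ r * Real.sqrt ((X 0 ω') ^ 2 + 1)} := by
      ext ω'
      exact sq_le_iff_abs_le hr.le
    have hMρmono : ∀ ρ1 ρ2 : ℝ, ρ1 ≤ ρ2 →
        {ω' | |ε ω'| ≤ ρ1 * Real.sqrt ((X 0 ω') ^ 2 + 1)}
          ⊆ {ω' | |ε ω'| ≤ ρ2 * Real.sqrt ((X 0 ω') ^ 2 + 1)} := by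
      intro ρ1 ρ2 h12 ω' h
      simp only [Set.mem_setOf_eq] at h ⊢
      calc |ε ω'| ≤ ρ1 * Real.sqrt ((X 0 ω') ^ 2 + 1) := h
        _ ≤ ρ2 * Real.sqrt ((X 0 ω') ^ 2 + 1) :=
            mul_le_mul_of_nonneg_right h12 (Real.sqrt_nonneg _)
    obtain ⟨ρQ, hρQgt, hρQval⟩ : ∃ ρQ : ℚ, r < (ρQ:ℝ) ∧
        ℙ {ω' | |ε ω'| ≤ (ρQ:ℝ) * Real.sqrt ((X 0 ω') ^ 2 + 1)}
          ≤ P0 + ENNReal.ofReal (δ/8) := by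
      have hmeasρ : ∀ k : ℕ, NullMeasurableSet
          {ω' | |ε ω'| ≤ (r + 1/(k+1)) * Real.sqrt ((X 0 ω') ^ 2 + 1)} ℙ := by
        intro k
        refine (measurableSet_le hmε.abs ?_).nullMeasurableSet
        exact (measurable_const.mul (((hmX 0).pow_const 2).add_const 1).sqrt)
      have hantiρ : Antitone (fun k : ℕ =>
          {ω' | |ε ω'| ≤ (r + 1/(k+1)) * Real.sqrt ((X 0 ω') ^ 2 + 1)}) := by
        intro k1 k2 h12
        apply hMρmono
        have h1 : (0:ℝ) < (k1:ℝ) + 1 := by positivity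
        have h2 : ((k1:ℝ)) + 1 ≤ (k2:ℝ) + 1 := by
          have : (k1:ℝ) ≤ k2 := by exact_mod_cast h12
          linarith
        have := one_div_le_one_div_of_le h1 h2
        linarith
      have hintρ : (⋂ k : ℕ, {ω' | |ε ω'| ≤ (r + 1/(k+1)) * Real.sqrt ((X 0 ω') ^ 2 + 1)})
          = {ω' | |ε ω'| ≤ r * Real.sqrt ((X 0 ω') ^ 2 + 1)} := by
        ext ω'
        simp only [Set.mem_iInter, Set.mem_setOf_eq]
        constructor
        · intro h
          have hlim : Tendsto (fun k : ℕ => (r + 1/(k+1)) * Real.sqrt ((X 0 ω') ^ 2 + 1))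
              atTop (𝓝 (r * Real.sqrt ((X 0 ω') ^ 2 + 1))) := by
            have h0 : Tendsto (fun k : ℕ => 1/((k:ℝ)+1)) atTop (𝓝 0) :=
              tendsto_one_div_add_atTop_nhds_zero_nat
            have := (h0.const_add r).mul_const (Real.sqrt ((X 0 ω') ^ 2 + 1))
            simpa using this
          exact ge_of_tendsto hlim (Filter.Eventually.of_forall h)
        · intro h k
          have h1 : (0:ℝ) < 1/((k:ℝ)+1) := by positivity
          have := mul_le_mul_of_nonneg_right (le_of_lt (lt_add_of_pos_right r h1))
            (Real.sqrt_nonneg ((X 0 ω') ^ 2 + 1))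
          calc |ε ω'| ≤ r * Real.sqrt ((X 0 ω') ^ 2 + 1) := h
            _ ≤ (r + 1/((k:ℝ)+1)) * Real.sqrt ((X 0 ω') ^ 2 + 1) := this
      have htendρ := tendsto_measure_iInter_atTop hmeasρ hantiρ ⟨0, measure_ne_top _ _⟩
      rw [hintρ, ← hP0alt] at htendρ
      have hlt : P0 < P0 + ENNReal.ofReal (δ/8) :=
        ENNReal.lt_add_right hP0top (ENNReal.ofReal_pos.mpr (by linarith)).ne'
      obtain ⟨k, hk⟩ := (htendρ.eventually_lt_const hlt).exists
      have hrk : r < r + 1/((k:ℝ)+1) := lt_add_of_pos_right r (by positivity)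
      obtain ⟨ρQ, hρQ1, hρQ2⟩ := exists_rat_btwn hrk
      refine ⟨ρQ, hρQ1, ?_⟩
      calc ℙ {ω' | |ε ω'| ≤ (ρQ:ℝ) * Real.sqrt ((X 0 ω') ^ 2 + 1)}
          ≤ ℙ {ω' | |ε ω'| ≤ (r + 1/((k:ℝ)+1)) * Real.sqrt ((X 0 ω') ^ 2 + 1)} :=
            measure_mono (hMρmono _ _ hρQ2.le)
        _ ≤ P0 + ENNReal.ofReal (δ/8) := hk.le
    have hρQ0 : (0:ℝ) < (ρQ:ℝ) := lt_trans hr hρQgt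
    -- band bracket value bound
    have hbandval : ∀ α β : ℝ,
        (ℙ (pair0 ⁻¹' bandSet α β (ρQ:ℝ))).toReal ≤ mstar + δ/8 := by
      intro α β
      have hseteq : pair0 ⁻¹' bandSet α β (ρQ:ℝ)
          = {ω' | |(fun x => (α - a0) * x + (β - b0)) (X 0 ω') - ε ω'|
              ≤ (fun x => (ρQ:ℝ) * Real.sqrt (x ^ 2 + 1)) (X 0 ω')} := by
        ext ω'
        simp only [hpair0, Set.mem_preimage, bandSet, Set.mem_setOf_eq]
        have h1 : X 0 ω' * α + β - Y 0 ω' = ((α - a0) * X 0 ω' + (β - b0)) - ε ω' := by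
          rw [hmodel ω']; ring
        rw [h1]
      have hmono2 := band_measure_le (X 0) ε (hmX 0) hmε hXε hshift
        (fun x => (α - a0) * x + (β - b0)) (fun x => (ρQ:ℝ) * Real.sqrt (x ^ 2 + 1))
        ((measurable_const.mul measurable_id).add_const (β - b0))
        (measurable_const.mul ((measurable_id.pow_const 2).add_const 1).sqrt)
        (fun x => mul_nonneg hρQ0.le (Real.sqrt_nonneg _))
      rw [← hseteq] at hmono2
      have hfinal : ℙ (pair0 ⁻¹' bandSet α β (ρQ:ℝ)) ≤ P0 + ENNReal.ofReal (δ/8) :=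
        le_trans hmono2 hρQval
      have := ENNReal.toReal_mono (by
        exact ENNReal.add_ne_top.mpr ⟨hP0top, ENNReal.ofReal_ne_top⟩) hfinal
      rwa [ENNReal.toReal_add hP0top ENNReal.ofReal_ne_top,
        ENNReal.toReal_ofReal (by linarith : (0:ℝ) ≤ δ/8)] at this
    -- limits along the ultrafilter via compactness of EReal
    have hlimE : ∀ u : ℕ → ℝ, ∃ A : EReal,
        Tendsto (fun n => ((u n : ℝ) : EReal)) (U : Filter ℕ) (𝓝 A) := by
      intro u
      obtain ⟨A, -, hA⟩ := isCompact_univ.ultrafilter_le_nhds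
        (U.map fun n => ((u n : ℝ) : EReal)) (by simp [le_principal_iff])
      refine ⟨A, ?_⟩
      rwa [Ultrafilter.coe_map] at hA
    have habs_of_top : ∀ u : ℕ → ℝ,
        Tendsto (fun n => ((u n : ℝ) : EReal)) (U : Filter ℕ) (𝓝 ⊤) →
        ∀ M : ℝ, ∀ᶠ n in (U : Filter ℕ), M < |u n| := by
      intro u hu M
      have h := EReal.tendsto_nhds_top_iff_real.mp hu (max M 0)
      filter_upwards [h] with n hn
      have h2 : max M 0 < u n := by exact_mod_cast hn
      calc M ≤ max M 0 := le_max_left _ _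
        _ < u n := h2
        _ ≤ |u n| := le_abs_self _
    have habs_of_bot : ∀ u : ℕ → ℝ,
        Tendsto (fun n => ((u n : ℝ) : EReal)) (U : Filter ℕ) (𝓝 ⊥) →
        ∀ M : ℝ, ∀ᶠ n in (U : Filter ℕ), M < |u n| := by
      intro u hu M
      have h := EReal.tendsto_nhds_bot_iff_real.mp hu (-(max M 0))
      filter_upwards [h] with n hn
      have h2 : u n < -(max M 0) := by exact_mod_cast hn
      have h3 : max M 0 < -(u n) := by linarith
      calc M ≤ max M 0 := le_max_left _ _
        _ < -(u n) := h3
        _ ≤ |u n| := neg_le_abs _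
    -- case: both coordinates converge
    have bandCase : ∀ A0 B0 : ℝ, Tendsto an (U : Filter ℕ) (𝓝 A0) →
        Tendsto bn (U : Filter ℕ) (𝓝 B0) → False := by
      intro A0 B0 hA0 hB0
      set κ : ℝ := ((ρQ:ℝ) - r) / (4 * ((T:ℝ) + 1)) with hκdef
      have hκpos : 0 < κ := div_pos (by linarith) (by positivity)
      obtain ⟨α, hα1, hα2⟩ := exists_rat_btwn (show A0 - κ < A0 by linarith)
      obtain ⟨β, hβ1, hβ2⟩ := exists_rat_btwn
        (show B0 - ((ρQ:ℝ) - r)/4 < B0 by linarith)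
      have hevA : ∀ᶠ n in (U : Filter ℕ), |an n - (α:ℝ)| * ((T:ℝ)+1) ≤ ((ρQ:ℝ) - r)/2 := by
        have h := Metric.tendsto_nhds.mp hA0 κ hκpos
        filter_upwards [h] with n hn
        rw [Real.dist_eq] at hn
        have h1 : |an n - (α:ℝ)| ≤ |an n - A0| + |A0 - (α:ℝ)| := by
          calc |an n - (α:ℝ)| = |(an n - A0) + (A0 - (α:ℝ))| := by ring_nf
            _ ≤ |an n - A0| + |A0 - (α:ℝ)| := abs_add_le _ _
        have h2 : |A0 - (α:ℝ)| < κ := by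
          rw [abs_of_pos (by linarith)]
          linarith
        have h3 : |an n - (α:ℝ)| ≤ 2 * κ := by linarith
        calc |an n - (α:ℝ)| * ((T:ℝ)+1) ≤ (2*κ) * ((T:ℝ)+1) :=
              mul_le_mul_of_nonneg_right h3 (by positivity)
          _ = ((ρQ:ℝ) - r)/2 := by
              rw [hκdef]
              field_simp
              ring
      have hevB : ∀ᶠ n in (U : Filter ℕ), |bn n - (β:ℝ)| ≤ ((ρQ:ℝ) - r)/2 := by
        have h := Metric.tendsto_nhds.mp hB0 (((ρQ:ℝ) - r)/4) (by linarith)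
        filter_upwards [h] with n hn
        rw [Real.dist_eq] at hn
        have h2 : |B0 - (β:ℝ)| < ((ρQ:ℝ) - r)/4 := by
          rw [abs_of_pos (by linarith)]
          linarith
        calc |bn n - (β:ℝ)| = |(bn n - B0) + (B0 - (β:ℝ))| := by ring_nf
          _ ≤ |bn n - B0| + |B0 - (β:ℝ)| := abs_add_le _ _
          _ ≤ ((ρQ:ℝ) - r)/2 := by linarith
      apply key (E1set (T:ℝ)) (bandSet (α:ℝ) (β:ℝ) (ρQ:ℝ)) ∅ ∅
        (hE1 T) (hband (α, β, ρQ)) hempty hempty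
      · simp only [Set.preimage_empty, measure_empty, ENNReal.toReal_zero]
        have h2 := hbandval (α:ℝ) (β:ℝ)
        linarith [hE1val]
      · filter_upwards [hevA, hevB] with n h1 h2
        rw [hθfab n]
        exact (band_incl hr.le (by positivity) h1 h2).trans
          (subset_union_left.trans subset_union_left)
    -- case: slope converges, intercept diverges
    have farBCase : ∀ A0 : ℝ, Tendsto an (U : Filter ℕ) (𝓝 A0) →
        (∀ M : ℝ, ∀ᶠ n in (U : Filter ℕ), M < |bn n|) → False := by
      intro A0 hA0 hMb
      have hevA : ∀ᶠ n in (U : Filter ℕ), |an n| ≤ |A0| + 1 := by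
        have h := Metric.tendsto_nhds.mp hA0 1 one_pos
        filter_upwards [h] with n hn
        rw [Real.dist_eq] at hn
        calc |an n| = |A0 + (an n - A0)| := by ring_nf
          _ ≤ |A0| + |an n - A0| := abs_add_le _ _
          _ ≤ |A0| + 1 := by linarith
      apply key (E1set (T:ℝ)) (E2set (S0:ℝ)) ∅ ∅ (hE1 T) (hE2 S0) hempty hempty
      · simp only [Set.preimage_empty, measure_empty, ENNReal.toReal_zero]
        linarith [hE1val, hE2val, hmstar0]
      · filter_upwards [hevA,
          hMb (r * Real.sqrt ((T:ℝ)^2+1) + (|A0|+1)*(T:ℝ) + (S0:ℝ))] with n h1 h2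
        rw [hθfab n]
        exact (far_b_incl hr.le h1 h2 (by positivity)).trans
          (subset_union_left.trans subset_union_left)
    -- case: slope diverges
    have steepCase : (∀ M : ℝ, ∀ᶠ n in (U : Filter ℕ), M < |an n|) → False := by
      intro hMa
      set cn : ℕ → ℝ := fun n => -(bn n) / (an n) with hcndef
      have hcnprop : ∀ᶠ n in (U : Filter ℕ), an n ≠ 0 ∧ an n * cn n = -(bn n) := by
        filter_upwards [hMa 0] with n hn
        have hne : an n ≠ 0 := by
          intro h
          rw [h] at hn
          simp at hn
        refine ⟨hne, ?_⟩
        rw [hcndef]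
        field_simp
      obtain ⟨Ce, hCe⟩ := hlimE cn
      have steepFar : (∀ M : ℝ, ∀ᶠ n in (U : Filter ℕ), M < |cn n|) → False := by
        intro hMc
        apply key (E1set (T:ℝ)) (E2set (S0:ℝ)) ∅ ∅ (hE1 T) (hE2 S0) hempty hempty
        · simp only [Set.preimage_empty, measure_empty, ENNReal.toReal_zero]
          linarith [hE1val, hE2val, hmstar0]
        · filter_upwards [hcnprop, hMa (r * Real.sqrt ((T:ℝ)^2+1) + (S0:ℝ)),
            hMc ((T:ℝ) + 1)] with n h1 h2 h3
          rw [hθfab n]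
          exact (far_c_incl hr.le h1.1 h1.2 h2.le h3).trans
            (subset_union_left.trans subset_union_left)
      have steepReal : ∀ C0 : ℝ, Tendsto cn (U : Filter ℕ) (𝓝 C0) → False := by
        intro C0 hC0
        by_cases hatom : 0 < ℙ {a | X 0 a = C0}
        · -- C0 is an atom of the law of X 0
          set ρ0 : ℝ := r * Real.sqrt (C0 ^ 2 + 1) with hρ0def
          have hsq10 : (1:ℝ) ≤ Real.sqrt (C0 ^ 2 + 1) := one_le_sqrt_sq_add_one C0
          have hρ0pos : 0 < ρ0 := by
            rw [hρ0def]; nlinarith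
          set hn' : ℕ → ℝ := fun n => an n * C0 + bn n with hhndef
          obtain ⟨tE, htE⟩ := hlimE hn'
          -- a small slab around the atom
          obtain ⟨wq, hwq0, hslabval⟩ : ∃ wq : ℚ, 0 < (wq:ℝ) ∧
              (ℙ (pair0 ⁻¹' slabSet C0 (wq:ℝ))).toReal ≤ δ/8 := by
            have hmeasI : ∀ k : ℕ, NullMeasurableSet (pair0 ⁻¹' slabSet C0 (1/((k:ℝ)+1))) ℙ := by
              intro k
              exact (((measurable_slabSet _ _).preimage
                ((hmX 0).prodMk (hmY 0)))).nullMeasurableSet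
            have hantiI : Antitone (fun k : ℕ => pair0 ⁻¹' slabSet C0 (1/((k:ℝ)+1))) := by
              intro k1 k2 h12 ω' hω'
              obtain ⟨⟨ha1, ha2⟩, ha3⟩ := hω'
              have h1 : (0:ℝ) < (k1:ℝ) + 1 := by positivity
              have h2 : ((k1:ℝ)) + 1 ≤ (k2:ℝ) + 1 := by
                have : (k1:ℝ) ≤ k2 := by exact_mod_cast h12
                linarith
              have h3 : 1/((k2:ℝ)+1) ≤ 1/((k1:ℝ)+1) := one_div_le_one_div_of_le h1 h2
              exact ⟨⟨by linarith, by linarith⟩, ha3⟩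
            have hintI : (⋂ k : ℕ, pair0 ⁻¹' slabSet C0 (1/((k:ℝ)+1))) = ∅ := by
              ext ω'
              simp only [Set.mem_iInter, Set.mem_empty_iff_false, iff_false, not_forall]
              by_cases hne : X 0 ω' = C0
              · refine ⟨0, ?_⟩
                intro hmem
                exact hmem.2 hne
              · have hpos : 0 < |X 0 ω' - C0| := abs_pos.mpr (sub_ne_zero.mpr hne)
                obtain ⟨k, hk⟩ := exists_nat_one_div_lt hpos
                refine ⟨k, ?_⟩
                intro hmem
                obtain ⟨⟨h1, h2⟩, _⟩ := hmem
                have : |X 0 ω' - C0| < 1/((k:ℝ)+1) := by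
                  rw [abs_lt]
                  constructor <;> linarith
                linarith
            have htendI := tendsto_measure_iInter_atTop hmeasI hantiI ⟨0, measure_ne_top _ _⟩
            rw [hintI, measure_empty] at htendI
            have hpos8 : (0:ENNReal) < ENNReal.ofReal (δ/8) :=
              ENNReal.ofReal_pos.mpr (by linarith)
            obtain ⟨k, hk⟩ := (htendI.eventually_lt_const hpos8).exists
            obtain ⟨wq, hwq1, hwq2⟩ := exists_rat_btwn
              (show (0:ℝ) < 1/((k:ℝ)+1) by positivity)
            refine ⟨wq, hwq1, ?_⟩
            have hsub : pair0 ⁻¹' slabSet C0 (wq:ℝ) ⊆ pair0 ⁻¹' slabSet C0 (1/((k:ℝ)+1)) := by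
              intro ω' hω'
              obtain ⟨⟨h1, h2⟩, h3⟩ := hω'
              exact ⟨⟨by linarith, by linarith⟩, h3⟩
            have hle := (measure_mono hsub).trans hk.le
            have := ENNReal.toReal_mono ENNReal.ofReal_ne_top hle
            rwa [ENNReal.toReal_ofReal (by linarith : (0:ℝ) ≤ δ/8)] at this
          -- common eventual slab-location bound
          have hslabloc : ∀ᶠ n in (U : Filter ℕ),
              (r * Real.sqrt ((T:ℝ)^2+1) + (S0:ℝ)) / |an n| + |cn n - C0| < (wq:ℝ) := by
            have hRS : 0 < r * Real.sqrt ((T:ℝ)^2+1) + (S0:ℝ) := by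
              have := one_le_sqrt_sq_add_one (T:ℝ)
              have : 0 < r * Real.sqrt ((T:ℝ)^2+1) := by nlinarith
              positivity
            have hcnC : ∀ᶠ n in (U : Filter ℕ), |cn n - C0| < (wq:ℝ)/2 := by
              have h := Metric.tendsto_nhds.mp hC0 ((wq:ℝ)/2) (by linarith)
              filter_upwards [h] with n hn
              rwa [Real.dist_eq] at hn
            filter_upwards [hcnC,
              hMa (2 * (r * Real.sqrt ((T:ℝ)^2+1) + (S0:ℝ)) / (wq:ℝ))] with n h1 h2
            have hapos : 0 < |an n| := by
              calc (0:ℝ) ≤ 2 * (r * Real.sqrt ((T:ℝ)^2+1) + (S0:ℝ)) / (wq:ℝ) := by positivity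
                _ < |an n| := h2
            have hdiv : (r * Real.sqrt ((T:ℝ)^2+1) + (S0:ℝ)) / |an n| < (wq:ℝ)/2 := by
              rw [div_lt_iff₀ hapos]
              have h3 : 2 * (r * Real.sqrt ((T:ℝ)^2+1) + (S0:ℝ)) / (wq:ℝ) * (wq:ℝ)
                  < |an n| * (wq:ℝ) := by
                apply mul_lt_mul_of_pos_right h2 hwq0
              rw [div_mul_cancel₀] at h3
              · nlinarith
              · exact ne_of_gt hwq0
            linarith
          -- sub-case: the column height diverges
          have atomFar : (∀ M : ℝ, ∀ᶠ n in (U : Filter ℕ), M < |hn' n|) → False := by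
            intro hMh
            apply key (E1set (T:ℝ)) (E2set (S0:ℝ)) (slabSet C0 (wq:ℝ)) ∅
              (hE1 T) (hE2 S0) (hslab (⟨C0, hatom⟩, wq)) hempty
            · simp only [Set.preimage_empty, measure_empty, ENNReal.toReal_zero]
              linarith [hE1val, hE2val, hslabval, hmstar0]
            · filter_upwards [hcnprop, hslabloc, hMh ((S0:ℝ) + ρ0)] with n h1 h2 h3
              rw [hθfab n]
              have hincl := steep_incl_noCol hr.le h1.1 h1.2 h2 h3
              exact hincl.trans subset_union_left
          -- sub-case: the column height converges
          have atomReal : ∀ t0 : ℝ, Tendsto hn' (U : Filter ℕ) (𝓝 t0) → False := by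
            intro t0 ht0
            set κ : ℝ := δ / (32 * (Cf + 1)) with hκdef
            have hκpos : 0 < κ := by
              rw [hκdef]
              positivity
            obtain ⟨t', ht'1, ht'2⟩ := exists_rat_btwn (show t0 - κ/2 < t0 by linarith)
            obtain ⟨ρ', hρ'1, hρ'2⟩ := exists_rat_btwn (show ρ0 + κ < ρ0 + 2*κ by linarith)
            have hρ'pos : (0:ℝ) < (ρ':ℝ) := by linarith
            have hρ0ρ' : ρ0 ≤ (ρ':ℝ) := by linarith
            -- value of the column bracket
            have hcolval : (ℙ (pair0 ⁻¹' colSet C0 ((t':ℝ) - (ρ':ℝ)) ((t':ℝ) + (ρ':ℝ)))).toReal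
                ≤ mstar + δ/8 := by
              have hseteq : pair0 ⁻¹' colSet C0 ((t':ℝ) - (ρ':ℝ)) ((t':ℝ) + (ρ':ℝ))
                  = {ω' | X 0 ω' = C0 ∧ ε ω' ∈ Set.Icc
                      (((t':ℝ) - (a0 * C0 + b0)) - (ρ':ℝ)) (((t':ℝ) - (a0 * C0 + b0)) + (ρ':ℝ))} := by
                ext ω'
                simp only [hpair0, colSet, Set.mem_preimage, Set.mem_setOf_eq, Set.mem_Icc]
                constructor
                · rintro ⟨h1, h2, h3⟩
                  have hy := hmodel ω'
                  rw [h1] at hy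
                  exact ⟨h1, by linarith, by linarith⟩
                · rintro ⟨h1, h2, h3⟩
                  have hy := hmodel ω'
                  rw [h1] at hy
                  exact ⟨h1, by linarith, by linarith⟩
              have hcol_eq := col_measure_eq (X 0) ε (hmX 0) hmε hXε C0
                (((t':ℝ) - (a0 * C0 + b0)) - (ρ':ℝ)) (((t':ℝ) - (a0 * C0 + b0)) + (ρ':ℝ))
              have hmain : ℙ (pair0 ⁻¹' colSet C0 ((t':ℝ) - (ρ':ℝ)) ((t':ℝ) + (ρ':ℝ)))
                  ≤ P0 + ENNReal.ofReal (δ/8) := by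
                rw [hseteq]
                have hstep1 : ℙ {ω' | X 0 ω' = C0 ∧ ε ω' ∈ Set.Icc
                      (((t':ℝ) - (a0 * C0 + b0)) - (ρ':ℝ)) (((t':ℝ) - (a0 * C0 + b0)) + (ρ':ℝ))}
                    = (Measure.map (X 0) ℙ) {C0} * ν (Set.Icc
                      (((t':ℝ) - (a0 * C0 + b0)) - (ρ':ℝ)) (((t':ℝ) - (a0 * C0 + b0)) + (ρ':ℝ))) := by
                  rw [hcol_eq]
                rw [hstep1]
                have hshift1 := hshift ((t':ℝ) - (a0 * C0 + b0)) (ρ':ℝ) hρ'pos.le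
                have hsub3 : Set.Icc (-(ρ':ℝ)) (ρ':ℝ) ⊆
                    Set.Icc (-ρ0) ρ0 ∪ Set.Icc (-(ρ':ℝ)) (-ρ0) ∪ Set.Icc ρ0 (ρ':ℝ) := by
                  intro t ht
                  obtain ⟨h1, h2⟩ := ht
                  rcases le_or_gt t (-ρ0) with h3 | h3
                  · exact Or.inl (Or.inr ⟨h1, h3⟩)
                  rcases le_or_gt ρ0 t with h4 | h4
                  · exact Or.inr ⟨h4, h2⟩
                  · exact Or.inl (Or.inl ⟨h3.le, h4.le⟩)
                have htails : ν (Set.Icc (-(ρ':ℝ)) (ρ':ℝ))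
                    ≤ ν (Set.Icc (-ρ0) ρ0) + ENNReal.ofReal (Cf * ((ρ':ℝ) - ρ0))
                      + ENNReal.ofReal (Cf * ((ρ':ℝ) - ρ0)) := by
                  calc ν (Set.Icc (-(ρ':ℝ)) (ρ':ℝ))
                      ≤ ν (Set.Icc (-ρ0) ρ0 ∪ Set.Icc (-(ρ':ℝ)) (-ρ0) ∪ Set.Icc ρ0 (ρ':ℝ)) :=
                        measure_mono hsub3
                    _ ≤ ν (Set.Icc (-ρ0) ρ0 ∪ Set.Icc (-(ρ':ℝ)) (-ρ0)) + ν (Set.Icc ρ0 (ρ':ℝ)) :=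
                        measure_union_le _ _
                    _ ≤ ν (Set.Icc (-ρ0) ρ0) + ν (Set.Icc (-(ρ':ℝ)) (-ρ0)) + ν (Set.Icc ρ0 (ρ':ℝ)) := by
                        gcongr
                        exact measure_union_le _ _
                    _ ≤ ν (Set.Icc (-ρ0) ρ0) + ENNReal.ofReal (Cf * ((ρ':ℝ) - ρ0))
                        + ENNReal.ofReal (Cf * ((ρ':ℝ) - ρ0)) := by
                        gcongr
                        · have := hνIcc (-(ρ':ℝ)) (-ρ0) (by linarith)
                          exact this.trans_eq (by ring_nf)
                        · have := hνIcc ρ0 (ρ':ℝ) (by linarith)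
                          exact this
                have hatom_le : (Measure.map (X 0) ℙ) {C0} * ν (Set.Icc (-ρ0) ρ0) ≤ P0 := by
                  rw [← col_measure_eq (X 0) ε (hmX 0) hmε hXε C0 (-ρ0) ρ0]
                  rw [hP0def]
                  apply measure_mono
                  intro ω' hω'
                  obtain ⟨h1, h2, h3⟩ := hω'
                  simp only [Set.mem_setOf_eq]
                  have hsq : Real.sqrt (C0 ^ 2 + 1) ^ 2 = C0 ^ 2 + 1 :=
                    Real.sq_sqrt (by positivity)
                  have hX : X 0 ω' ^ 2 = C0 ^ 2 := by rw [h1]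
                  rw [hX]
                  have : ε ω' ^ 2 ≤ ρ0 ^ 2 := by nlinarith
                  rw [hρ0def] at this
                  nlinarith
                have hoftail : ENNReal.ofReal (Cf * ((ρ':ℝ) - ρ0))
                    + ENNReal.ofReal (Cf * ((ρ':ℝ) - ρ0)) ≤ ENNReal.ofReal (δ/8) := by
                  rw [← ENNReal.ofReal_add (mul_nonneg hCf0 (by linarith)) (mul_nonneg hCf0 (by linarith))]
                  apply ENNReal.ofReal_le_ofReal
                  have h1 : (ρ':ℝ) - ρ0 ≤ 2*κ := by linarith
                  have h2 : Cf * ((ρ':ℝ) - ρ0) ≤ Cf * (2*κ) :=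
                    mul_le_mul_of_nonneg_left h1 hCf0
                  have h3 : Cf * (2*κ) + Cf * (2*κ) = 4 * κ * Cf := by ring
                  have h4 : 4 * κ * Cf ≤ δ/8 := by
                    have h5 : κ * (32*(Cf+1)) = δ := by
                      rw [hκdef]
                      field_simp
                    nlinarith [hκpos.le, hCf0]
                  linarith
                calc (Measure.map (X 0) ℙ) {C0} * ν (Set.Icc
                      (((t':ℝ) - (a0 * C0 + b0)) - (ρ':ℝ)) (((t':ℝ) - (a0 * C0 + b0)) + (ρ':ℝ)))
                    ≤ (Measure.map (X 0) ℙ) {C0} * ν (Set.Icc (-(ρ':ℝ)) (ρ':ℝ)) := by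
                      exact mul_le_mul_right hshift1 _
                  _ ≤ (Measure.map (X 0) ℙ) {C0} * (ν (Set.Icc (-ρ0) ρ0)
                        + ENNReal.ofReal (Cf * ((ρ':ℝ) - ρ0))
                        + ENNReal.ofReal (Cf * ((ρ':ℝ) - ρ0))) := mul_le_mul_right htails _
                  _ = (Measure.map (X 0) ℙ) {C0} * ν (Set.Icc (-ρ0) ρ0)
                        + (Measure.map (X 0) ℙ) {C0} * ENNReal.ofReal (Cf * ((ρ':ℝ) - ρ0))
                        + (Measure.map (X 0) ℙ) {C0} * ENNReal.ofReal (Cf * ((ρ':ℝ) - ρ0)) := by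
                      rw [mul_add, mul_add]
                  _ ≤ P0 + ENNReal.ofReal (Cf * ((ρ':ℝ) - ρ0))
                        + ENNReal.ofReal (Cf * ((ρ':ℝ) - ρ0)) := by
                      have hle1 : (Measure.map (X 0) ℙ) {C0} ≤ 1 := prob_le_one
                      have ht1 : (Measure.map (X 0) ℙ) {C0} * ENNReal.ofReal (Cf * ((ρ':ℝ) - ρ0))
                          ≤ ENNReal.ofReal (Cf * ((ρ':ℝ) - ρ0)) := by
                        calc (Measure.map (X 0) ℙ) {C0} * ENNReal.ofReal (Cf * ((ρ':ℝ) - ρ0))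
                            ≤ 1 * ENNReal.ofReal (Cf * ((ρ':ℝ) - ρ0)) := mul_le_mul_left hle1 _
                          _ = ENNReal.ofReal (Cf * ((ρ':ℝ) - ρ0)) := one_mul _
                      exact add_le_add (add_le_add hatom_le ht1) ht1
                  _ = P0 + (ENNReal.ofReal (Cf * ((ρ':ℝ) - ρ0))
                        + ENNReal.ofReal (Cf * ((ρ':ℝ) - ρ0))) := add_assoc _ _ _
                  _ ≤ P0 + ENNReal.ofReal (δ/8) := add_le_add le_rfl hoftail
              have := ENNReal.toReal_mono
                (ENNReal.add_ne_top.mpr ⟨hP0top, ENNReal.ofReal_ne_top⟩) hmain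
              rwa [ENNReal.toReal_add hP0top ENNReal.ofReal_ne_top,
                ENNReal.toReal_ofReal (by linarith : (0:ℝ) ≤ δ/8)] at this
            -- eventual closeness of the column height
            have hthev : ∀ᶠ n in (U : Filter ℕ), |hn' n - (t':ℝ)| ≤ κ := by
              have h := Metric.tendsto_nhds.mp ht0 (κ/2) (by linarith)
              filter_upwards [h] with n hn
              rw [Real.dist_eq] at hn
              have h2 : |t0 - (t':ℝ)| < κ/2 := by
                rw [abs_of_pos (by linarith)]
                linarith
              calc |hn' n - (t':ℝ)| = |(hn' n - t0) + (t0 - (t':ℝ))| := by ring_nf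
                _ ≤ |hn' n - t0| + |t0 - (t':ℝ)| := abs_add_le _ _
                _ ≤ κ := by linarith
            -- the column bracket provided by the countable family
            have hcolT := hcol (⟨C0, hatom⟩, t' - ρ', t' + ρ')
            have hcast1 : ((t' - ρ' : ℚ) : ℝ) = (t':ℝ) - (ρ':ℝ) := by push_cast; ring
            have hcast2 : ((t' + ρ' : ℚ) : ℝ) = (t':ℝ) + (ρ':ℝ) := by push_cast; ring
            rw [hcast1, hcast2] at hcolT
            apply key (E1set (T:ℝ)) (E2set (S0:ℝ)) (slabSet C0 (wq:ℝ))
              (colSet C0 ((t':ℝ) - (ρ':ℝ)) ((t':ℝ) + (ρ':ℝ)))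
              (hE1 T) (hE2 S0) (hslab (⟨C0, hatom⟩, wq)) hcolT
            · linarith [hE1val, hE2val, hslabval, hcolval]
            · filter_upwards [hcnprop, hslabloc, hthev] with n h1 h2 h3
              rw [hθfab n]
              have hincl := steep_incl hr.le h1.1 h1.2 h2 h3
              refine hincl.trans ?_
              apply Set.union_subset_union_right
              intro p hp
              obtain ⟨hp1, hp2, hp3⟩ := hp
              refine ⟨hp1, ?_, ?_⟩ <;> [linarith; linarith]
          induction tE using EReal.rec with
          | bot => exact atomFar (habs_of_bot hn' htE)
          | top => exact atomFar (habs_of_top hn' htE)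
          | coe t0 => exact atomReal t0 (EReal.tendsto_coe.mp htE)
        · -- C0 is not an atom
          have hzero : ℙ {a | X 0 a = C0} = 0 := by
            by_contra h
            exact hatom (lt_of_le_of_ne zero_le (Ne.symm h))
          obtain ⟨q1, q2, hq1C, hq2C, hioval⟩ : ∃ q1 q2 : ℚ, (q1:ℝ) < C0 ∧ C0 < (q2:ℝ) ∧
              (ℙ (pair0 ⁻¹' iooSet (q1:ℝ) (q2:ℝ))).toReal ≤ δ/8 := by
            have hmeasI : ∀ k : ℕ, NullMeasurableSet
                {ω' | X 0 ω' ∈ Set.Ioo (C0 - 1/((k:ℝ)+1)) (C0 + 1/((k:ℝ)+1))} ℙ :=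
              fun k => (measurableSet_Ioo.preimage (hmX 0)).nullMeasurableSet
            have hantiI : Antitone (fun k : ℕ =>
                {ω' | X 0 ω' ∈ Set.Ioo (C0 - 1/((k:ℝ)+1)) (C0 + 1/((k:ℝ)+1))}) := by
              intro k1 k2 h12 ω' hω'
              obtain ⟨h1, h2⟩ := hω'
              have ha1 : (0:ℝ) < (k1:ℝ) + 1 := by positivity
              have ha2 : ((k1:ℝ)) + 1 ≤ (k2:ℝ) + 1 := by
                have : (k1:ℝ) ≤ k2 := by exact_mod_cast h12
                linarith
              have h3 : 1/((k2:ℝ)+1) ≤ 1/((k1:ℝ)+1) := one_div_le_one_div_of_le ha1 ha2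
              exact ⟨by linarith, by linarith⟩
            have hintI : (⋂ k : ℕ, {ω' | X 0 ω' ∈ Set.Ioo (C0 - 1/((k:ℝ)+1)) (C0 + 1/((k:ℝ)+1))})
                = {a | X 0 a = C0} := by
              ext ω'
              simp only [Set.mem_iInter, Set.mem_setOf_eq, Set.mem_Ioo]
              constructor
              · intro h
                by_contra hne
                have hpos : 0 < |X 0 ω' - C0| := abs_pos.mpr (sub_ne_zero.mpr hne)
                obtain ⟨k, hk⟩ := exists_nat_one_div_lt hpos
                obtain ⟨h1, h2⟩ := h k
                have : |X 0 ω' - C0| < 1/((k:ℝ)+1) := by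
                  rw [abs_lt]
                  constructor <;> linarith
                linarith
              · intro h k
                have hp : (0:ℝ) < 1/((k:ℝ)+1) := by positivity
                rw [h]
                constructor <;> linarith
            have htendI := tendsto_measure_iInter_atTop hmeasI hantiI ⟨0, measure_ne_top _ _⟩
            rw [hintI, hzero] at htendI
            have hpos8 : (0:ENNReal) < ENNReal.ofReal (δ/8) :=
              ENNReal.ofReal_pos.mpr (by linarith)
            obtain ⟨k, hk⟩ := (htendI.eventually_lt_const hpos8).exists
            obtain ⟨q1, hq11, hq12⟩ := exists_rat_btwn
              (show C0 - 1/((k:ℝ)+1) < C0 by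
                have : (0:ℝ) < 1/((k:ℝ)+1) := by positivity
                linarith)
            obtain ⟨q2, hq21, hq22⟩ := exists_rat_btwn
              (show C0 < C0 + 1/((k:ℝ)+1) by
                have : (0:ℝ) < 1/((k:ℝ)+1) := by positivity
                linarith)
            refine ⟨q1, q2, hq12, hq21, ?_⟩
            have hsub : pair0 ⁻¹' iooSet (q1:ℝ) (q2:ℝ)
                ⊆ {ω' | X 0 ω' ∈ Set.Ioo (C0 - 1/((k:ℝ)+1)) (C0 + 1/((k:ℝ)+1))} := by
              intro ω' hω'
              obtain ⟨h1, h2⟩ := hω'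
              exact ⟨by linarith, by linarith⟩
            have hle := (measure_mono hsub).trans hk.le
            have := ENNReal.toReal_mono ENNReal.ofReal_ne_top hle
            rwa [ENNReal.toReal_ofReal (by linarith : (0:ℝ) ≤ δ/8)] at this
          set w : ℝ := min (C0 - (q1:ℝ)) ((q2:ℝ) - C0) with hwdef
          have hwpos : 0 < w := lt_min (by linarith) (by linarith)
          have hslabloc : ∀ᶠ n in (U : Filter ℕ),
              (r * Real.sqrt ((T:ℝ)^2+1) + (S0:ℝ)) / |an n| + |cn n - C0| < w := by
            have hcnC : ∀ᶠ n in (U : Filter ℕ), |cn n - C0| < w/2 := by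
              have h := Metric.tendsto_nhds.mp hC0 (w/2) (by linarith)
              filter_upwards [h] with n hn
              rwa [Real.dist_eq] at hn
            filter_upwards [hcnC,
              hMa (2 * (r * Real.sqrt ((T:ℝ)^2+1) + (S0:ℝ)) / w)] with n h1 h2
            have hRS : 0 < r * Real.sqrt ((T:ℝ)^2+1) + (S0:ℝ) := by
              have h4 := one_le_sqrt_sq_add_one (T:ℝ)
              have : 0 < r * Real.sqrt ((T:ℝ)^2+1) := by nlinarith
              positivity
            have hapos : 0 < |an n| := by
              calc (0:ℝ) ≤ 2 * (r * Real.sqrt ((T:ℝ)^2+1) + (S0:ℝ)) / w := by positivity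
                _ < |an n| := h2
            have hdiv : (r * Real.sqrt ((T:ℝ)^2+1) + (S0:ℝ)) / |an n| < w/2 := by
              rw [div_lt_iff₀ hapos]
              have h3 : 2 * (r * Real.sqrt ((T:ℝ)^2+1) + (S0:ℝ)) / w * w
                  < |an n| * w := mul_lt_mul_of_pos_right h2 hwpos
              rw [div_mul_cancel₀] at h3
              · nlinarith
              · exact ne_of_gt hwpos
            linarith
          apply key (E1set (T:ℝ)) (E2set (S0:ℝ)) (iooSet (q1:ℝ) (q2:ℝ)) ∅
            (hE1 T) (hE2 S0) (hioo (q1, q2)) hempty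
          · simp only [Set.preimage_empty, measure_empty, ENNReal.toReal_zero]
            linarith [hE1val, hE2val, hioval, hmstar0]
          · filter_upwards [hcnprop, hslabloc] with n h1 h2
            rw [hθfab n]
            have hq1w : (q1:ℝ) ≤ C0 - w := by
              have := min_le_left (C0 - (q1:ℝ)) ((q2:ℝ) - C0)
              rw [← hwdef] at this
              linarith
            have hq2w : C0 + w ≤ (q2:ℝ) := by
              have := min_le_right (C0 - (q1:ℝ)) ((q2:ℝ) - C0)
              rw [← hwdef] at this
              linarith
            exact (steep_incl_ioo hr.le h1.1 h1.2 h2 hq1w hq2w).trans subset_union_left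
      induction Ce using EReal.rec with
      | bot => exact steepFar (habs_of_bot cn hCe)
      | top => exact steepFar (habs_of_top cn hCe)
      | coe C0 => exact steepReal C0 (EReal.tendsto_coe.mp hCe)
    obtain ⟨A, hA⟩ := hlimE an
    induction A using EReal.rec with
    | bot => exact steepCase (habs_of_bot an hA)
    | top => exact steepCase (habs_of_top an hA)
    | coe A0 =>
      have hA0 : Tendsto an (U : Filter ℕ) (𝓝 A0) := EReal.tendsto_coe.mp hA
      obtain ⟨B, hB⟩ := hlimE bn
      induction B using EReal.rec with
      | bot => exact farBCase A0 hA0 (habs_of_bot bn hB)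
      | top => exact farBCase A0 hA0 (habs_of_top bn hB)
      | coe B0 => exact bandCase A0 B0 hA0 (EReal.tendsto_coe.mp hB)
  -- conclude
  apply tendsto_of_le_liminf_of_limsup_le _ _ hBddU hBddL
  · -- mstar ≤ liminf
    calc mstar = liminf (fun n => empAvg X Y (houghSet r (a0, b0)) n ω) atTop :=
          (hA0slln.liminf_eq).symm
      _ ≤ liminf (fun n => ⨆ θ : ℝ × ℝ, Mn n θ ω) atTop :=
          liminf_le_liminf (Filter.Eventually.of_forall hsup_ge)
            hA0slln.isBoundedUnder_ge hBddU.isCoboundedUnder_ge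
  · -- limsup ≤ mstar
    by_contra hcon
    push_neg at hcon
    have hδ : 0 < (limsup (fun n => ⨆ θ : ℝ × ℝ, Mn n θ ω) atTop - mstar) / 2 := by
      linarith
    have := hub _ hδ
    linarith
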